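/- Let Γ be a finite bipartite (simple) graph with at least 4 vertices. The following assertions are equivalent: (1) Γ has no induced subgraph isomorphic to the path P5 on 5 vertices, and Γ is prime; (2) Γ is critical; (3) Γ is a half graph. -/

import Mathlib

/-!
Formalization of 2-structures (Ehrenfeucht et al.), modules, primality,
criticality, the outside partition/graph, and (discrete) half graphs.
-/

universe u

variable {V : Type u}

/-- A 2-structure on the vertex type `V`: an equivalence relation on ordered
pairs of (distinct) vertices.  Only its values on off-diagonal pairs matter. -/
structure TwoStructure (V : Type u) where
  rel : V × V → V × V → Prop
  refl : ∀ p : V × V, p.1 ≠ p.2 → rel p p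
  symm : ∀ {p q : V × V}, rel p q → rel q p
  trans : ∀ {p q r : V × V}, rel p q → rel q r → rel p r

namespace TwoStructure

variable (σ : TwoStructure V)

/-- `M` is a module of the induced substructure `σ[W]`. -/
def IsModuleOn (W M : Set V) : Prop :=
  M ⊆ W ∧ ∀ x ∈ M, ∀ y ∈ M, ∀ v ∈ W \ M,
    σ.rel (x, v) (y, v) ∧ σ.rel (v, x) (v, y)

/-- The induced substructure `σ[W]` is prime: it has at least 3 vertices and
all of its modules are trivial. -/
def IsPrimeOn (W : Set V) : Prop :=
  3 ≤ W.encard ∧ ∀ M : Set V, σ.IsModuleOn W M → M = ∅ ∨ M = W ∨ ∃ v, M = {v}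

/-- The induced substructure `σ[W]` is `S`-critical: it is prime and removing
any vertex of `S` destroys primality. -/
def IsCriticalOn (W S : Set V) : Prop :=
  σ.IsPrimeOn W ∧ ∀ v ∈ S, ¬ σ.IsPrimeOn (W \ {v})

/-- `Ext_σ(X)`: the vertices `v ∉ X` with `σ[X ∪ {v}]` prime. -/
def extSet (X : Set V) : Set V := {v | v ∉ X ∧ σ.IsPrimeOn (X ∪ {v})}

/-- `⟨X⟩_σ`: the vertices `v ∉ X` such that `X` is a module of `σ[X ∪ {v}]`. -/
def innSet (X : Set V) : Set V := {v | v ∉ X ∧ σ.IsModuleOn (X ∪ {v}) X}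

/-- `X_σ(α)`: the vertices `v ∉ X` such that `{α, v}` is a module of `σ[X ∪ {v}]`. -/
def attSet (X : Set V) (α : V) : Set V :=
  {v | v ∉ X ∧ σ.IsModuleOn (X ∪ {v}) {α, v}}

/-- The outside partition `p_{(σ, X̄)}`. -/
def pBlocks (X : Set V) : Set (Set V) :=
  {σ.extSet X, σ.innSet X} ∪ (fun α => σ.attSet X α) '' X

/-- `⟨X⟩_σ^{(e,f)}` where the classes `e` and `f` are given by representative
pairs: vertices `v ∈ ⟨X⟩_σ` with `(v,α) ≡_σ e` and `(α,v) ≡_σ f` for all `α ∈ X`. -/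
def innSetC (X : Set V) (e f : V × V) : Set V :=
  {v | v ∈ σ.innSet X ∧ ∀ α ∈ X, σ.rel (v, α) e ∧ σ.rel (α, v) f}

/-- `X_σ^{(e,f)}(α)` where the classes `e` and `f` are given by representative
pairs. -/
def attSetC (X : Set V) (α : V) (e f : V × V) : Set V :=
  {v | v ∈ σ.attSet X α ∧ σ.rel (v, α) e ∧ σ.rel (α, v) f}

/-- The refined outside partition `q_{(σ, X̄)}`. -/
def qBlocks (X : Set V) : Set (Set V) :=
  {σ.extSet X} ∪ {B | ∃ e f : V × V, B = σ.innSetC X e f}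
    ∪ {B | ∃ α ∈ X, ∃ e f : V × V, B = σ.attSetC X α e f}

/-- `q^a`: the blocks of `q_{(σ, X̄)}` other than `Ext_σ(X)` that are not of the
symmetric form `⟨X⟩_σ^{(e,e)}` or `X_σ^{(e,e)}(α)`. -/
def qaBlocks (X : Set V) : Set (Set V) :=
  {B | B ∈ σ.qBlocks X ∧ B ≠ σ.extSet X ∧
    ¬ ∃ e : V × V, B = σ.innSetC X e e ∨ ∃ α ∈ X, B = σ.attSetC X α e e}

/-- The outside graph `Γ_{(σ, X̄)}`: on the vertex set `X̄ = Xᶜ`, two distinct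
vertices `v, w` are adjacent when `σ[X ∪ {v, w}]` is prime.  (Vertices of `X`
are not incident to any edge.) -/
def outsideGraph (X : Set V) : SimpleGraph V where
  Adj v w := v ∉ X ∧ w ∉ X ∧ v ≠ w ∧ σ.IsPrimeOn (X ∪ {v, w})
  symm := by
    constructor
    rintro v w ⟨hv, hw, hvw, hp⟩
    refine ⟨hw, hv, hvw.symm, ?_⟩
    rwa [Set.pair_comm w v]
  loopless := by
    constructor
    rintro v ⟨-, -, h, -⟩
    exact h rfl

/-- `C` is (the vertex set of) a connected component of the outside graph
`Γ_{(σ, X̄)}` (a component of the graph induced on `X̄`). -/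
def IsComponent (X : Set V) (C : Set V) : Prop :=
  ∃ v, v ∉ X ∧ C = {w | (σ.outsideGraph X).Reachable v w}

end TwoStructure

/-- `M` is a module of the subgraph of `G` induced on `W`. -/
def GraphIsModuleOn (G : SimpleGraph V) (W M : Set V) : Prop :=
  M ⊆ W ∧ ∀ v ∈ W \ M, (∀ x ∈ M, G.Adj v x) ∨ (∀ x ∈ M, ¬ G.Adj v x)

/-- The subgraph of `G` induced on `W` is prime. -/
def GraphIsPrimeOn (G : SimpleGraph V) (W : Set V) : Prop :=
  3 ≤ W.encard ∧ ∀ M : Set V, GraphIsModuleOn G W M → M = ∅ ∨ M = W ∨ ∃ v, M = {v}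

/-- The subgraph of `G` induced on `W` is critical: prime, and removing any of
its vertices destroys primality. -/
def GraphIsCriticalOn (G : SimpleGraph V) (W : Set V) : Prop :=
  GraphIsPrimeOn G W ∧ ∀ v ∈ W, ¬ GraphIsPrimeOn G (W \ {v})

/-- The subgraph of `G` induced on `S` contains an induced path `P₅` on five
vertices. -/
def HasInducedP5On (G : SimpleGraph V) (S : Set V) : Prop :=
  ∃ a b c d e : V, a ∈ S ∧ b ∈ S ∧ c ∈ S ∧ d ∈ S ∧ e ∈ S ∧
    a ≠ b ∧ a ≠ c ∧ a ≠ d ∧ a ≠ e ∧ b ≠ c ∧ b ≠ d ∧ b ≠ e ∧ c ≠ d ∧ c ≠ e ∧ d ≠ e ∧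
    G.Adj a b ∧ G.Adj b c ∧ G.Adj c d ∧ G.Adj d e ∧
    ¬ G.Adj a c ∧ ¬ G.Adj a d ∧ ¬ G.Adj a e ∧ ¬ G.Adj b d ∧ ¬ G.Adj b e ∧ ¬ G.Adj c e

/-- `r` is a linear order on the set `X`. -/
def IsLinearOrderOn (X : Set V) (r : V → V → Prop) : Prop :=
  (∀ x ∈ X, r x x) ∧
  (∀ x ∈ X, ∀ y ∈ X, r x y → r y x → x = y) ∧
  (∀ x ∈ X, ∀ y ∈ X, ∀ z ∈ X, r x y → r y z → r x z) ∧
  (∀ x ∈ X, ∀ y ∈ X, r x y ∨ r y x)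

/-- The linear order `r` on `X` is discrete: every element other than the
minimum has an immediate predecessor, and every element other than the maximum
has an immediate successor. -/
def IsDiscreteOn (X : Set V) (r : V → V → Prop) : Prop :=
  (∀ x ∈ X, ¬ (∀ y ∈ X, r x y) →
    ∃ p ∈ X, p ≠ x ∧ r p x ∧ ∀ z ∈ X, r p z → r z x → z = p ∨ z = x) ∧
  (∀ x ∈ X, ¬ (∀ y ∈ X, r y x) →
    ∃ s ∈ X, s ≠ x ∧ r x s ∧ ∀ z ∈ X, r x z → r z s → z = x ∨ z = s)

/-- `G` is the half graph determined by the bipartition `{X, Y}` of its vertex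
set, the linear order `r` on `X`, and the bijection `φ : X → Y`: the edges of
`G` are exactly the pairs `{x, φ x'}` with `x ≤ x'` in `r`. -/
def IsHalfGraphWith (G : SimpleGraph V) (X Y : Set V) (r : V → V → Prop)
    (φ : V → V) : Prop :=
  Disjoint X Y ∧ X ∪ Y = Set.univ ∧ IsLinearOrderOn X r ∧ Set.BijOn φ X Y ∧
    ∀ u v : V, G.Adj u v ↔ ∃ x ∈ X, ∃ x' ∈ X, r x x' ∧
      ((u = x ∧ v = φ x') ∨ (v = x ∧ u = φ x'))

/-- `G` is a half graph. -/
def IsHalfGraph (G : SimpleGraph V) : Prop :=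
  ∃ (X Y : Set V) (r : V → V → Prop) (φ : V → V), IsHalfGraphWith G X Y r φ

/-- `G` is a discrete half graph: a half graph whose defining linear order is
discrete. -/
def IsDiscreteHalfGraph (G : SimpleGraph V) : Prop :=
  ∃ (X Y : Set V) (r : V → V → Prop) (φ : V → V),
    IsHalfGraphWith G X Y r φ ∧ IsDiscreteOn X r

/-- `G` is bipartite: its vertex set splits into two independent sets. -/
def IsBipartite (G : SimpleGraph V) : Prop :=
  ∃ X Y : Set V, Disjoint X Y ∧ X ∪ Y = Set.univ ∧
    (∀ u ∈ X, ∀ v ∈ X, ¬ G.Adj u v) ∧ (∀ u ∈ Y, ∀ v ∈ Y, ¬ G.Adj u v)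

section AuxER

open Set

variable {G : SimpleGraph V} {A M W : Set V} {v w z α β : V}

/-- two elements of `A` avoiding `α`. -/
lemma two_avoid (h3 : 3 ≤ A.encard) (α : V) :
    ∃ a ∈ A, ∃ b ∈ A, a ≠ b ∧ a ≠ α ∧ b ≠ α := by
  have h2 : 1 < (A \ {α}).encard := by
    by_cases hα : α ∈ A
    · have h := Set.encard_diff_singleton_add_one hα
      have : (1:ℕ∞) + 1 + 1 ≤ (A \ {α}).encard + 1 := by
        rw [h]; exact le_trans (by norm_num) h3
      have h2' : (1:ℕ∞) + 1 ≤ (A \ {α}).encard :=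
        (WithTop.add_le_add_iff_right ENat.one_ne_top).mp this
      exact lt_of_lt_of_le (by norm_num) h2'
    · rw [Set.diff_singleton_eq_self hα]
      exact lt_of_lt_of_le (by norm_num) h3
  obtain ⟨a, b, ha, hb, hab⟩ := Set.one_lt_encard_iff.mp h2
  exact ⟨a, ha.1, b, hb.1, hab, ha.2, hb.2⟩

lemma encard_pos_of_three (h3 : 3 ≤ A.encard) : A.Nonempty := by
  rw [Set.nonempty_iff_ne_empty]
  rintro rfl
  rw [Set.encard_empty] at h3
  exact (by norm_num : ¬ (3:ℕ∞) ≤ 0) h3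

lemma not_singleton_of_three (h3 : 3 ≤ A.encard) (x : V) : A ≠ {x} := by
  rintro rfl
  rw [Set.encard_singleton] at h3
  exact (by norm_num : ¬ (3:ℕ∞) ≤ 1) h3

lemma mod_restrict (hAW : A ⊆ W) (hM : GraphIsModuleOn G W M) :
    GraphIsModuleOn G A (M ∩ A) := by
  refine ⟨inter_subset_right, ?_⟩
  rintro z ⟨hzA, hzM⟩
  have hz : z ∈ W \ M := ⟨hAW hzA, fun h => hzM ⟨h, hzA⟩⟩
  rcases hM.2 z hz with h | h
  · exact Or.inl fun x hx => h x hx.1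
  · exact Or.inr fun x hx => h x hx.1

lemma not_prime_module (h3 : 3 ≤ W.encard) (h : ¬ GraphIsPrimeOn G W) :
    ∃ M, GraphIsModuleOn G W M ∧ M ≠ ∅ ∧ M ≠ W ∧ ∀ x, M ≠ {x} := by
  rcases not_and_or.mp h with h | h
  · exact absurd h3 h
  · push_neg at h
    obtain ⟨M, hM, h1⟩ := h
    exact ⟨M, hM, h1.1.ne_empty, h1.2.1, h1.2.2⟩

lemma two_mem (hne : M ≠ ∅) (hsing : ∀ x, M ≠ {x}) :
    ∃ u ∈ M, ∃ v ∈ M, u ≠ v := by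
  obtain ⟨u, hu⟩ := Set.nonempty_iff_ne_empty.mpr hne
  by_cases h : ∀ x ∈ M, x = u
  · exact absurd (Set.eq_singleton_iff_unique_mem.mpr ⟨hu, h⟩) (hsing u)
  · push_neg at h
    obtain ⟨v, hv, hvu⟩ := h
    exact ⟨u, hu, v, hv, fun e => hvu e.symm⟩

/-- `v` is uniform on `A`. -/
def UniP (G : SimpleGraph V) (A : Set V) (v : V) : Prop :=
  (∀ a ∈ A, G.Adj v a) ∨ (∀ a ∈ A, ¬ G.Adj v a)

/-- `v` looks like `α` from everywhere in `A \ {α}`. -/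
def TwPP (G : SimpleGraph V) (A : Set V) (α v : V) : Prop :=
  ∀ b ∈ A, b ≠ α → (G.Adj b v ↔ G.Adj b α)

lemma uniP_of_module_out (hM : GraphIsModuleOn G W M) (hz : z ∈ W \ M) :
    ∀ x ∈ M, ∀ y ∈ M, (G.Adj z x ↔ G.Adj z y) := by
  intro x hx y hy
  rcases hM.2 z hz with h | h
  · simp [h x hx, h y hy]
  · simp [h x hx, h y hy]

end AuxER


section AuxER2

open Set

variable {G : SimpleGraph V} {A M : Set V} {v w z α β : V}

lemma dUni_Tw (hA : GraphIsPrimeOn G A) (hα : α ∈ A)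
    (hU : UniP G A v) (hT : TwPP G A α v) : False := by
  have hmod : GraphIsModuleOn G A (A \ {α}) := by
    refine ⟨diff_subset, ?_⟩
    rintro z ⟨hzA, hz⟩
    have hzα : z = α := by
      by_contra h; exact hz ⟨hzA, h⟩
    subst hzα
    rcases hU with h | h
    · refine Or.inl ?_
      rintro x ⟨hxA, hxα⟩
      exact (((hT x hxA hxα).mp (h x hxA).symm)).symm
    · refine Or.inr ?_
      rintro x ⟨hxA, hxα⟩
      intro hadj
      exact h x hxA ((hT x hxA hxα).mpr hadj.symm).symm
  obtain ⟨a, ha, b, hb, hab, haα, hbα⟩ := two_avoid hA.1 α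
  rcases hA.2 _ hmod with h | h | ⟨x, h⟩
  · exact (Set.eq_empty_iff_forall_notMem.mp h) a ⟨ha, haα⟩
  · have : α ∈ A \ {α} := by rw [h]; exact hα
    exact this.2 rfl
  · have h1 : a ∈ ({x} : Set V) := by rw [← h]; exact ⟨ha, haα⟩
    have h2 : b ∈ ({x} : Set V) := by rw [← h]; exact ⟨hb, hbα⟩
    rw [Set.mem_singleton_iff] at h1 h2
    exact hab (h1.trans h2.symm)

lemma dTw_Tw (hA : GraphIsPrimeOn G A) (hα : α ∈ A) (hβ : β ∈ A) (hne : α ≠ β)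
    (h1 : TwPP G A α v) (h2 : TwPP G A β v) : False := by
  have hmod : GraphIsModuleOn G A {α, β} := by
    refine ⟨?_, ?_⟩
    · rintro x hx
      simp only [Set.mem_insert_iff, Set.mem_singleton_iff] at hx
      rcases hx with rfl | rfl <;> assumption
    · rintro z ⟨hzA, hz⟩
      simp only [Set.mem_insert_iff, Set.mem_singleton_iff, not_or] at hz
      have e1 := h1 z hzA hz.1
      have e2 := h2 z hzA hz.2
      by_cases h : G.Adj z α
      · refine Or.inl ?_
        rintro x hx
        simp only [Set.mem_insert_iff, Set.mem_singleton_iff] at hx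
        rcases hx with rfl | rfl
        · exact h
        · exact e2.mp (e1.mpr h)
      · refine Or.inr ?_
        rintro x hx
        simp only [Set.mem_insert_iff, Set.mem_singleton_iff] at hx
        rcases hx with rfl | rfl
        · exact h
        · exact fun hh => h (e1.mp (e2.mpr hh))
  obtain ⟨a, ha, b, hb, hab, haα, hbα⟩ := two_avoid hA.1 α
  rcases hA.2 _ hmod with h | h | ⟨x, h⟩
  · exact (Set.eq_empty_iff_forall_notMem.mp h) α (Or.inl rfl)
  · by_cases haβ : a = β
    · have hb' : b ∈ ({α, β} : Set V) := by rw [h]; exact hb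
      simp only [Set.mem_insert_iff, Set.mem_singleton_iff] at hb'
      rcases hb' with h' | h'
      · exact hbα h'
      · exact hab (haβ.trans h'.symm)
    · have ha' : a ∈ ({α, β} : Set V) := by rw [h]; exact ha
      simp only [Set.mem_insert_iff, Set.mem_singleton_iff] at ha'
      rcases ha' with h' | h'
      · exact haα h'
      · exact haβ h'
  · have hα' : α ∈ ({x} : Set V) := by rw [← h]; exact Or.inl rfl
    have hβ' : β ∈ ({x} : Set V) := by rw [← h]; exact Or.inr rfl
    rw [Set.mem_singleton_iff] at hα' hβ'
    exact hne (hα'.trans hβ'.symm)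

lemma dExt_Uni (hA : GraphIsPrimeOn G A) (hv : v ∉ A)
    (hP : GraphIsPrimeOn G (A ∪ {v})) (hU : UniP G A v) : False := by
  have hmod : GraphIsModuleOn G (A ∪ {v}) A := by
    refine ⟨subset_union_left, ?_⟩
    rintro z ⟨hzW, hzA⟩
    have hzv : z = v := by
      rcases hzW with h | h
      · exact absurd h hzA
      · exact h
    subst hzv
    exact hU
  rcases hP.2 _ hmod with h | h | ⟨x, h⟩
  · exact (encard_pos_of_three hA.1).ne_empty h
  · apply hv; rw [h]; exact Set.mem_union_right _ rfl
  · exact not_singleton_of_three hA.1 x h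

lemma dExt_Tw (hA : GraphIsPrimeOn G A) (hv : v ∉ A) (hα : α ∈ A)
    (hP : GraphIsPrimeOn G (A ∪ {v})) (hT : TwPP G A α v) : False := by
  have hmod : GraphIsModuleOn G (A ∪ {v}) {α, v} := by
    refine ⟨?_, ?_⟩
    · rintro x hx
      simp only [Set.mem_insert_iff, Set.mem_singleton_iff] at hx
      rcases hx with rfl | rfl
      · exact Set.mem_union_left _ hα
      · exact Set.mem_union_right _ rfl
    · rintro z ⟨hzW, hz⟩
      simp only [Set.mem_insert_iff, Set.mem_singleton_iff, not_or] at hz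
      have hzA : z ∈ A := by
        rcases hzW with h | h
        · exact h
        · exact absurd h hz.2
      have e := hT z hzA hz.1
      by_cases h : G.Adj z α
      · refine Or.inl ?_
        rintro x hx
        simp only [Set.mem_insert_iff, Set.mem_singleton_iff] at hx
        rcases hx with rfl | rfl
        · exact h
        · exact e.mpr h
      · refine Or.inr ?_
        rintro x hx
        simp only [Set.mem_insert_iff, Set.mem_singleton_iff] at hx
        rcases hx with rfl | rfl
        · exact h
        · exact fun hh => h (e.mp hh)
  rcases hP.2 _ hmod with h | h | ⟨x, h⟩
  · exact (Set.eq_empty_iff_forall_notMem.mp h) α (Or.inl rfl)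
  · obtain ⟨a, ha, b, hb, hab, haα, hbα⟩ := two_avoid hA.1 α
    have ha' : a ∈ ({α, v} : Set V) := by rw [h]; exact Set.mem_union_left _ ha
    have hb' : b ∈ ({α, v} : Set V) := by rw [h]; exact Set.mem_union_left _ hb
    simp only [Set.mem_insert_iff, Set.mem_singleton_iff] at ha' hb'
    rcases ha' with h1 | h1
    · exact haα h1
    · rcases hb' with h2 | h2
      · exact hbα h2
      · exact hab (h1.trans h2.symm)
  · have h1 : α ∈ ({x} : Set V) := by rw [← h]; exact Or.inl rfl
    have h2 : v ∈ ({x} : Set V) := by rw [← h]; exact Or.inr rfl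
    rw [Set.mem_singleton_iff] at h1 h2
    apply hv; rw [h2.trans h1.symm]; exact hα

lemma classify (hA : GraphIsPrimeOn G A) (hv : v ∉ A)
    (hnp : ¬ GraphIsPrimeOn G (A ∪ {v})) :
    UniP G A v ∨ ∃ α ∈ A, TwPP G A α v := by
  have h3 : 3 ≤ (A ∪ {v}).encard := le_trans hA.1 (Set.encard_mono subset_union_left)
  obtain ⟨M, hM, hne, hW, hsing⟩ := not_prime_module h3 hnp
  rcases hA.2 _ (mod_restrict subset_union_left hM) with h | h | ⟨x, h⟩
  · exfalso
    have hMv : M ⊆ {v} := by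
      intro x hx
      rcases hM.1 hx with h1 | h1
      · exact absurd ((Set.eq_empty_iff_forall_notMem.mp h) x ⟨hx, h1⟩) not_false
      · exact h1
    rcases Set.subset_singleton_iff_eq.mp hMv with h1 | h1
    · exact hne h1
    · exact hsing v h1
  · have hAM : A ⊆ M := fun x hx => ((Set.ext_iff.mp h x).mpr hx).1
    have hMA : M = A := by
      by_cases hvM : v ∈ M
      · exfalso
        apply hW
        apply Set.Subset.antisymm hM.1
        rintro x (hx | hx)
        · exact hAM hx
        · rw [Set.mem_singleton_iff] at hx; subst hx; exact hvM
      · apply Set.Subset.antisymm _ hAM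
        intro x hx
        rcases hM.1 hx with h1 | h1
        · exact h1
        · rw [Set.mem_singleton_iff] at h1; subst h1; exact absurd hx hvM
    left
    have hvout : v ∈ (A ∪ {v}) \ M := ⟨Set.mem_union_right _ rfl, by rw [hMA]; exact hv⟩
    rcases hM.2 v hvout with hu | hu
    · exact Or.inl (fun a ha => hu a (by rw [hMA]; exact ha))
    · exact Or.inr (fun a ha => hu a (by rw [hMA]; exact ha))
  · right
    have hxM : x ∈ M := ((Set.ext_iff.mp h x).mpr rfl).1
    have hxA : x ∈ A := ((Set.ext_iff.mp h x).mpr rfl).2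
    have hvM : v ∈ M := by
      by_contra hvM
      have hMx : M ⊆ {x} := by
        intro y hy
        rcases hM.1 hy with h1 | h1
        · exact (Set.ext_iff.mp h y).mp ⟨hy, h1⟩
        · rw [Set.mem_singleton_iff] at h1; subst h1; exact absurd hy hvM
      rcases Set.subset_singleton_iff_eq.mp hMx with h1 | h1
      · exact hne h1
      · exact hsing x h1
    refine ⟨x, hxA, ?_⟩
    intro b hb hbx
    have hbout : b ∈ (A ∪ {v}) \ M := by
      refine ⟨Set.mem_union_left _ hb, fun hbM => hbx ?_⟩
      have : b ∈ M ∩ A := ⟨hbM, hb⟩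
      rw [h] at this; exact this
    exact uniP_of_module_out hM hbout v hvM x hxM

lemma pairCases (hA : GraphIsPrimeOn G A) (hv : v ∉ A) (hw : w ∉ A) (hvw : v ≠ w)
    (hnp : ¬ GraphIsPrimeOn G (A ∪ {v, w})) :
    (UniP G A v ∧ UniP G A w)
    ∨ (UniP G A w ∧ ∀ a ∈ A, (G.Adj w v ↔ G.Adj w a))
    ∨ (UniP G A v ∧ ∀ a ∈ A, (G.Adj v w ↔ G.Adj v a))
    ∨ (∃ α ∈ A, TwPP G A α v ∧ (G.Adj w α ↔ G.Adj w v))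
    ∨ (∃ α ∈ A, TwPP G A α w ∧ (G.Adj v α ↔ G.Adj v w))
    ∨ (∃ α ∈ A, TwPP G A α v ∧ TwPP G A α w)
    ∨ (∀ a ∈ A, G.Adj a v ↔ G.Adj a w) := by
  have h3 : 3 ≤ (A ∪ {v, w}).encard := le_trans hA.1 (Set.encard_mono subset_union_left)
  have hvW : v ∈ A ∪ {v, w} := Set.mem_union_right _ (Or.inl rfl)
  have hwW : w ∈ A ∪ {v, w} := Set.mem_union_right _ (Or.inr rfl)
  obtain ⟨M, hM, hne, hW, hsing⟩ := not_prime_module h3 hnp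
  rcases hA.2 _ (mod_restrict subset_union_left hM) with h | h | ⟨x, h⟩
  · -- M ∩ A = ∅, so M = {v, w}
    have hMsub : M ⊆ {v, w} := by
      intro y hy
      rcases hM.1 hy with h1 | h1
      · exact absurd ((Set.eq_empty_iff_forall_notMem.mp h) y ⟨hy, h1⟩) not_false
      · exact h1
    obtain ⟨u1, hu1, u2, hu2, hu12⟩ := two_mem hne hsing
    have hvM : v ∈ M ∧ w ∈ M := by
      have m1 := hMsub hu1
      have m2 := hMsub hu2
      simp only [Set.mem_insert_iff, Set.mem_singleton_iff] at m1 m2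
      rcases m1 with rfl | rfl <;> rcases m2 with rfl | rfl
      · exact absurd rfl hu12
      · exact ⟨hu1, hu2⟩
      · exact ⟨hu2, hu1⟩
      · exact absurd rfl hu12
    refine Or.inr (Or.inr (Or.inr (Or.inr (Or.inr (Or.inr ?_)))))
    intro a ha
    have haout : a ∈ (A ∪ {v, w}) \ M := by
      refine ⟨Set.mem_union_left _ ha, fun haM => ?_⟩
      exact (Set.eq_empty_iff_forall_notMem.mp h) a ⟨haM, ha⟩
    exact uniP_of_module_out hM haout v hvM.1 w hvM.2
  · -- M ∩ A = A
    have hAM : A ⊆ M := fun x hx => ((Set.ext_iff.mp h x).mpr hx).1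
    by_cases hvM : v ∈ M <;> by_cases hwM : w ∈ M
    · exfalso
      apply hW
      apply Set.Subset.antisymm hM.1
      rintro x (hx | hx)
      · exact hAM hx
      · simp only [Set.mem_insert_iff, Set.mem_singleton_iff] at hx
        rcases hx with rfl | rfl
        · exact hvM
        · exact hwM
    · -- M = A ∪ {v}
      have hMA : M = A ∪ {v} := by
        apply Set.Subset.antisymm
        · intro y hy
          rcases hM.1 hy with h1 | h1
          · exact Set.mem_union_left _ h1
          · simp only [Set.mem_insert_iff, Set.mem_singleton_iff] at h1
            rcases h1 with rfl | rfl
            · exact Set.mem_union_right _ rfl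
            · exact absurd hy hwM
        · rintro y (hy | hy)
          · exact hAM hy
          · rw [Set.mem_singleton_iff] at hy; subst hy; exact hvM
      have hwout : w ∈ (A ∪ {v, w}) \ M := ⟨hwW, fun h' => hwM h'⟩
      refine Or.inr (Or.inl ⟨?_, ?_⟩)
      · rcases hM.2 w hwout with hu | hu
        · exact Or.inl (fun a ha => hu a (hAM ha))
        · exact Or.inr (fun a ha => hu a (hAM ha))
      · intro a ha
        exact uniP_of_module_out hM hwout v hvM a (hAM ha)
    · -- M = A ∪ {w}
      have hvout : v ∈ (A ∪ {v, w}) \ M := ⟨hvW, fun h' => hvM h'⟩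
      refine Or.inr (Or.inr (Or.inl ⟨?_, ?_⟩))
      · rcases hM.2 v hvout with hu | hu
        · exact Or.inl (fun a ha => hu a (hAM ha))
        · exact Or.inr (fun a ha => hu a (hAM ha))
      · intro a ha
        exact uniP_of_module_out hM hvout w hwM a (hAM ha)
    · -- M = A
      have hvout : v ∈ (A ∪ {v, w}) \ M := ⟨hvW, fun h' => hvM h'⟩
      have hwout : w ∈ (A ∪ {v, w}) \ M := ⟨hwW, fun h' => hwM h'⟩
      refine Or.inl ⟨?_, ?_⟩
      · rcases hM.2 v hvout with hu | hu
        · exact Or.inl (fun a ha => hu a (hAM ha))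
        · exact Or.inr (fun a ha => hu a (hAM ha))
      · rcases hM.2 w hwout with hu | hu
        · exact Or.inl (fun a ha => hu a (hAM ha))
        · exact Or.inr (fun a ha => hu a (hAM ha))
  · -- M ∩ A = {x}
    have hxM : x ∈ M := ((Set.ext_iff.mp h x).mpr rfl).1
    have hxA : x ∈ A := ((Set.ext_iff.mp h x).mpr rfl).2
    have hnotM : ∀ b ∈ A, b ≠ x → b ∉ M := by
      intro b hb hbx hbM
      exact hbx ((Set.ext_iff.mp h b).mp ⟨hbM, hb⟩)
    have hvwM : v ∈ M ∨ w ∈ M := by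
      by_contra hcon
      push_neg at hcon
      have hMx : M ⊆ {x} := by
        intro y hy
        rcases hM.1 hy with h1 | h1
        · exact (Set.ext_iff.mp h y).mp ⟨hy, h1⟩
        · simp only [Set.mem_insert_iff, Set.mem_singleton_iff] at h1
          rcases h1 with rfl | rfl
          · exact absurd hy hcon.1
          · exact absurd hy hcon.2
      rcases Set.subset_singleton_iff_eq.mp hMx with h1 | h1
      · exact hne h1
      · exact hsing x h1
    have twv : v ∈ M → TwPP G A x v := by
      intro hvM b hb hbx
      exact uniP_of_module_out hM
        ⟨Set.mem_union_left _ hb, hnotM b hb hbx⟩ v hvM x hxM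
    have tww : w ∈ M → TwPP G A x w := by
      intro hwM b hb hbx
      exact uniP_of_module_out hM
        ⟨Set.mem_union_left _ hb, hnotM b hb hbx⟩ w hwM x hxM
    by_cases hvM : v ∈ M <;> by_cases hwM : w ∈ M
    · exact Or.inr (Or.inr (Or.inr (Or.inr (Or.inr (Or.inl
        ⟨x, hxA, twv hvM, tww hwM⟩)))))
    · refine Or.inr (Or.inr (Or.inr (Or.inl ⟨x, hxA, twv hvM, ?_⟩)))
      exact uniP_of_module_out hM ⟨hwW, hwM⟩ x hxM v hvM
    · refine Or.inr (Or.inr (Or.inr (Or.inr (Or.inl ⟨x, hxA, tww hwM, ?_⟩))))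
      exact uniP_of_module_out hM ⟨hvW, hvM⟩ x hxM w hwM
    · exact absurd hvwM (by push_neg; exact ⟨hvM, hwM⟩)

end AuxER2


section AuxER3

open Set

variable {G : SimpleGraph V} {A : Set V}

theorem ERext (hG : GraphIsPrimeOn G (Set.univ : Set V)) (hA : GraphIsPrimeOn G A)
    (v₀ w₀ : V) (hv₀ : v₀ ∉ A) (hw₀ : w₀ ∉ A) (hvw₀ : v₀ ≠ w₀) :
    ∃ v w : V, v ∉ A ∧ w ∉ A ∧ v ≠ w ∧ GraphIsPrimeOn G (A ∪ {v, w}) := by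
  by_contra hno
  push_neg at hno
  have hno' : ∀ v w : V, v ∉ A → w ∉ A → v ≠ w → ¬ GraphIsPrimeOn G (A ∪ {v, w}) :=
    hno
  -- Step 1: there are no "attached" (twin-like) outside vertices.
  have hTw : ∀ α ∈ A, ∀ u, u ∉ A → TwPP G A α u → False := by
    intro α hα u hu hTu
    set C : Set V := insert α {z | z ∉ A ∧ TwPP G A α z} with hC
    have hkey : ∀ z, z ∉ C → ∀ x ∈ C, (G.Adj z x ↔ G.Adj z α) := by
      intro z hzC x hx
      rcases Set.mem_insert_iff.mp hx with rfl | hx'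
      · exact Iff.rfl
      · obtain ⟨hxA, hTx⟩ := hx'
        by_cases hzA : z ∈ A
        · have hzα : z ≠ α := fun e => hzC (by rw [e]; exact Set.mem_insert _ _)
          exact hTx z hzA hzα
        · have hzT : ¬ TwPP G A α z :=
            fun hT => hzC (Set.mem_insert_iff.mpr (Or.inr ⟨hzA, hT⟩))
          have hzx : z ≠ x := fun e => hzT (e ▸ hTx)
          rcases pairCases hA hzA hxA hzx (hno' z x hzA hxA hzx) with
            ⟨_, hUx⟩ | ⟨hUx, _⟩ | ⟨_, h3⟩ | ⟨β, hβ, hTz, hiff⟩ | ⟨β, hβ, hTx', hiff⟩ |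
            ⟨β, hβ, hTz, hTx'⟩ | h7
          · exact absurd (dUni_Tw hA hα hUx hTx) not_false
          · exact absurd (dUni_Tw hA hα hUx hTx) not_false
          · exact h3 α hα
          · -- z is a twin of β ≠ α
            have hβα : β ≠ α := fun e => hzT (e ▸ hTz)
            -- Adj z x ↔ Adj x β ↔ Adj β α ↔ Adj z α
            have e1 : G.Adj x β ↔ G.Adj x z := hiff
            have e2 : G.Adj β x ↔ G.Adj β α := hTx β hβ hβα
            have e3 : G.Adj α z ↔ G.Adj α β := hTz α hα (fun e => hβα e.symm)
            constructor
            · intro h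
              have h1 : G.Adj x β := e1.mpr h.symm
              have h2 : G.Adj β α := e2.mp h1.symm
              exact (e3.mpr h2.symm).symm
            · intro h
              have h1 : G.Adj α β := e3.mp h.symm
              have h2 : G.Adj β x := e2.mpr h1.symm
              exact (e1.mp h2.symm).symm
          · have hβeq : β = α := by
              by_contra hne
              exact dTw_Tw hA hβ hα hne hTx' hTx
            subst hβeq
            exact hiff.symm
          · have hβeq : β = α := by
              by_contra hne
              exact dTw_Tw hA hβ hα hne hTx' hTx
            subst hβeq
            exact absurd hTz hzT
          · exfalso
            apply hzT
            intro b hb hbα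
            exact (h7 b hb).trans (hTx b hb hbα)
    have hmod : GraphIsModuleOn G Set.univ C := by
      refine ⟨subset_univ _, ?_⟩
      rintro z ⟨-, hzC⟩
      by_cases h : G.Adj z α
      · exact Or.inl (fun x hx => (hkey z hzC x hx).mpr h)
      · exact Or.inr (fun x hx hh => h ((hkey z hzC x hx).mp hh))
    rcases hG.2 _ hmod with h | h | ⟨x, h⟩
    · exact (Set.eq_empty_iff_forall_notMem.mp h) α (Set.mem_insert _ _)
    · obtain ⟨a, ha, b, hb, hab, haα, hbα⟩ := two_avoid hA.1 α
      have haC : a ∈ C := by rw [h]; trivial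
      rcases Set.mem_insert_iff.mp haC with h' | h'
      · exact haα h'
      · exact h'.1 ha
    · have h1 : α ∈ ({x} : Set V) := by rw [← h]; exact Set.mem_insert _ _
      have h2 : u ∈ ({x} : Set V) := by
        rw [← h]; exact Set.mem_insert_iff.mpr (Or.inr ⟨hu, hTu⟩)
      rw [Set.mem_singleton_iff] at h1 h2
      apply hu; rw [h2.trans h1.symm]; exact hα
  -- classification of outside vertices
  have hcls : ∀ z, z ∉ A → GraphIsPrimeOn G (A ∪ {z}) ∨ UniP G A z := by
    intro z hz
    by_cases hp : GraphIsPrimeOn G (A ∪ {z})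
    · exact Or.inl hp
    · rcases classify hA hz hp with h | ⟨α, hα, hT⟩
      · exact Or.inr h
      · exact absurd (hTw α hα z hz hT) not_false
  obtain ⟨a₀, ha₀⟩ := encard_pos_of_three hA.1
  -- the ③-type fact: a non-prime uniform vertex behaves uniformly towards Ext vertices
  have h3only : ∀ z, z ∉ A → ¬ GraphIsPrimeOn G (A ∪ {z}) → UniP G A z →
      ∀ u, u ∉ A → GraphIsPrimeOn G (A ∪ {u}) → ∀ a ∈ A, (G.Adj z u ↔ G.Adj z a) := by
    intro z hz hzP hUz u hu huP a ha
    have hzu : z ≠ u := by rintro rfl; exact hzP huP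
    rcases pairCases hA hz hu hzu (hno' z u hz hu hzu) with
      ⟨_, hUu⟩ | ⟨hUu, _⟩ | ⟨_, h3⟩ | ⟨β, hβ, hTz, _⟩ | ⟨β, hβ, hTu, _⟩ |
      ⟨β, hβ, _, hTu⟩ | h7
    · exact absurd (dExt_Uni hA hu huP hUu) not_false
    · exact absurd (dExt_Uni hA hu huP hUu) not_false
    · exact h3 a ha
    · exact absurd (dUni_Tw hA hβ hUz hTz) not_false
    · exact absurd (dExt_Tw hA hu hβ huP hTu) not_false
    · exact absurd (dExt_Tw hA hu hβ huP hTu) not_false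
    · exfalso
      apply dExt_Uni hA hu huP
      rcases hUz with h | h
      · exact Or.inl (fun b hb => ((h7 b hb).mp (h b hb).symm).symm)
      · exact Or.inr (fun b hb hh => h b hb ((h7 b hb).mpr hh.symm).symm)
  by_cases hE : ∃ e, e ∉ A ∧ GraphIsPrimeOn G (A ∪ {e})
  · obtain ⟨e, heA, heP⟩ := hE
    by_cases hE2 : ∃ e', e' ∉ A ∧ GraphIsPrimeOn G (A ∪ {e'}) ∧ e' ≠ e
    · -- the set of extension vertices is a module
      obtain ⟨e', heA', heP', hee'⟩ := hE2
      set E : Set V := {u | u ∉ A ∧ GraphIsPrimeOn G (A ∪ {u})} with hEdef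
      have hEE : ∀ u ∈ E, ∀ u' ∈ E, u ≠ u' → ∀ a ∈ A, (G.Adj a u ↔ G.Adj a u') := by
        rintro u ⟨huA, huP⟩ u' ⟨huA', huP'⟩ huu' a ha
        rcases pairCases hA huA huA' huu' (hno' u u' huA huA' huu') with
          ⟨hUu, _⟩ | ⟨hUu, _⟩ | ⟨hUu, _⟩ | ⟨β, hβ, hTu, _⟩ | ⟨β, hβ, hTu, _⟩ |
          ⟨β, hβ, hTu, _⟩ | h7
        · exact absurd (dExt_Uni hA huA huP hUu) not_false
        · exact absurd (dExt_Uni hA huA' huP' hUu) not_false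
        · exact absurd (dExt_Uni hA huA huP hUu) not_false
        · exact absurd (dExt_Tw hA huA hβ huP hTu) not_false
        · exact absurd (dExt_Tw hA huA' hβ huP' hTu) not_false
        · exact absurd (dExt_Tw hA huA hβ huP hTu) not_false
        · exact h7 a ha
      have hmod : GraphIsModuleOn G Set.univ E := by
        refine ⟨subset_univ _, ?_⟩
        rintro z ⟨-, hzE⟩
        by_cases hzA : z ∈ A
        · by_cases hadj : G.Adj z e
          · refine Or.inl ?_
            rintro x ⟨hxA, hxP⟩
            by_cases hxe : x = e
            · exact hxe ▸ hadj
            · exact (hEE e ⟨heA, heP⟩ x ⟨hxA, hxP⟩ (fun h => hxe h.symm) z hzA).mp hadj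
          · refine Or.inr ?_
            rintro x ⟨hxA, hxP⟩ hh
            by_cases hxe : x = e
            · exact hadj (hxe ▸ hh)
            · exact hadj ((hEE e ⟨heA, heP⟩ x ⟨hxA, hxP⟩ (fun h => hxe h.symm)
                z hzA).mpr hh)
        · have hzP : ¬ GraphIsPrimeOn G (A ∪ {z}) := fun hp => hzE ⟨hzA, hp⟩
          have hUz : UniP G A z := by
            rcases hcls z hzA with h | h
            · exact absurd h hzP
            · exact h
          by_cases hadj : G.Adj z a₀
          · refine Or.inl ?_
            rintro x ⟨hxA, hxP⟩
            exact (h3only z hzA hzP hUz x hxA hxP a₀ ha₀).mpr hadj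
          · refine Or.inr ?_
            rintro x ⟨hxA, hxP⟩ hh
            exact hadj ((h3only z hzA hzP hUz x hxA hxP a₀ ha₀).mp hh)
      rcases hG.2 _ hmod with h | h | ⟨x, h⟩
      · exact (Set.eq_empty_iff_forall_notMem.mp h) e ⟨heA, heP⟩
      · have : a₀ ∈ E := by rw [h]; trivial
        exact this.1 ha₀
      · have h1 : e ∈ ({x} : Set V) := by rw [← h]; exact ⟨heA, heP⟩
        have h2 : e' ∈ ({x} : Set V) := by rw [← h]; exact ⟨heA', heP'⟩
        rw [Set.mem_singleton_iff] at h1 h2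
        exact hee' (h2.trans h1.symm)
    · -- unique extension vertex: A ∪ {e} is a module
      push_neg at hE2
      have hmod : GraphIsModuleOn G Set.univ (A ∪ {e}) := by
        refine ⟨subset_univ _, ?_⟩
        rintro z ⟨-, hzM⟩
        have hzA : z ∉ A := fun h => hzM (Set.mem_union_left _ h)
        have hze : z ≠ e := fun h => hzM (Set.mem_union_right _ h)
        have hzP : ¬ GraphIsPrimeOn G (A ∪ {z}) := fun hp => hze (hE2 z hzA hp)
        have hUz : UniP G A z := by
          rcases hcls z hzA with h | h
          · exact absurd h hzP
          · exact h
        rcases hUz with h | h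
        · refine Or.inl ?_
          rintro x (hx | hx)
          · exact h x hx
          · rw [Set.mem_singleton_iff] at hx; rw [hx]
            exact (h3only z hzA hzP (Or.inl h) e heA heP a₀ ha₀).mpr (h a₀ ha₀)
        · refine Or.inr ?_
          rintro x (hx | hx)
          · exact h x hx
          · rw [Set.mem_singleton_iff] at hx; rw [hx]
            intro hh
            exact h a₀ ha₀ ((h3only z hzA hzP (Or.inr h) e heA heP a₀ ha₀).mp hh)
      rcases hG.2 _ hmod with h | h | ⟨x, h⟩
      · exact (Set.eq_empty_iff_forall_notMem.mp h) e (Set.mem_union_right _ rfl)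
      · -- A ∪ {e} = univ : but v₀ and w₀ are both outside A and distinct, one differs from e
        have hv' : v₀ ∈ A ∪ {e} := by rw [h]; trivial
        have hw' : w₀ ∈ A ∪ {e} := by rw [h]; trivial
        rcases hv' with h1 | h1
        · exact hv₀ h1
        · rcases hw' with h2 | h2
          · exact hw₀ h2
          · rw [Set.mem_singleton_iff] at h1 h2
            exact hvw₀ (h1.trans h2.symm)
      · have h1 : a₀ ∈ ({x} : Set V) := by rw [← h]; exact Set.mem_union_left _ ha₀
        have h2 : e ∈ ({x} : Set V) := by rw [← h]; exact Set.mem_union_right _ rfl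
        rw [Set.mem_singleton_iff] at h1 h2
        exact heA (by rw [h2.trans h1.symm]; exact ha₀)
  · -- no extension vertices at all: A is a module
    push_neg at hE
    have hmod : GraphIsModuleOn G Set.univ A := by
      refine ⟨subset_univ _, ?_⟩
      rintro z ⟨-, hzA⟩
      rcases hcls z hzA with h | h
      · exact absurd h (hE z hzA)
      · exact h
    rcases hG.2 _ hmod with h | h | ⟨x, h⟩
    · exact (encard_pos_of_three hA.1).ne_empty h
    · exact hv₀ (by rw [h]; trivial)
    · exact not_singleton_of_three hA.1 x h

lemma ER_chain [Finite V] (hG : GraphIsPrimeOn G (Set.univ : Set V)) :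
    ∀ n : ℕ, ∀ A : Set V, GraphIsPrimeOn G A → (Set.univ \ A).ncard = n → Odd n →
      ∃ v : V, GraphIsPrimeOn G (Set.univ \ {v}) := by
  intro n
  induction n using Nat.strong_induction_on with
  | _ n ih =>
    intro A hA hcard hodd
    have hmod2 : n % 2 = 1 := Nat.odd_iff.mp hodd
    rcases eq_or_ne n 1 with rfl | hn1
    · obtain ⟨v, hv⟩ := Set.ncard_eq_one.mp hcard
      refine ⟨v, ?_⟩
      have h' : Set.univ \ {v} = A := by
        rw [← hv]; exact Set.diff_diff_cancel_left (Set.subset_univ A)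
      rw [h']; exact hA
    · have hn3 : 3 ≤ n := by omega
      have h2 : 1 < (Set.univ \ A).ncard := by omega
      obtain ⟨v, w, hv, hw, hvw⟩ :=
        (Set.one_lt_ncard_iff (Set.toFinite _)).mp h2
      obtain ⟨v', w', hv', hw', hne', hP⟩ := ERext hG hA v w hv.2 hw.2 hvw
      have hsub : ({v', w'} : Set V) ⊆ Set.univ \ A := by
        rintro x hx
        rcases Set.mem_insert_iff.mp hx with rfl | hx'
        · exact ⟨trivial, hv'⟩
        · rw [Set.mem_singleton_iff] at hx'; subst hx'
          exact ⟨trivial, hw'⟩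
      have hcard' : (Set.univ \ (A ∪ {v', w'})).ncard = n - 2 := by
        rw [← Set.diff_diff]
        rw [Set.ncard_diff hsub (Set.toFinite _)]
        rw [Set.ncard_pair hne', hcard]
      exact ih (n - 2) (by omega) (A ∪ {v', w'}) hP hcard'
        (Nat.odd_iff.mpr (by omega))

end AuxER3


section AuxBasics

open Set

variable {G : SimpleGraph V} {A M W : Set V}

lemma mod_pull (hM : GraphIsModuleOn G W M) {u v s : V}
    (hu : u ∈ M) (hv : v ∈ M) (hs : s ∈ W) (h1 : G.Adj s u) (h2 : ¬ G.Adj s v) :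
    s ∈ M := by
  by_contra hsM
  rcases hM.2 s ⟨hs, hsM⟩ with h | h
  · exact h2 (h v hv)
  · exact h u hu h1

lemma prime_not_isolated (hG : GraphIsPrimeOn G (Set.univ : Set V)) (v : V) :
    ∃ u, G.Adj v u := by
  by_contra h
  push_neg at h
  have hmod : GraphIsModuleOn G Set.univ (Set.univ \ {v}) := by
    refine ⟨diff_subset, ?_⟩
    rintro z ⟨-, hz⟩
    have hzv : z = v := by
      by_contra h'
      exact hz ⟨trivial, h'⟩
    subst hzv
    exact Or.inr (fun x _ hh => (h x) hh)
  rcases hG.2 _ hmod with h' | h' | ⟨x, h'⟩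
  · have hsub : (Set.univ : Set V) ⊆ {v} := Set.diff_eq_empty.mp h'
    have := le_trans hG.1 (le_trans (Set.encard_mono hsub) (le_of_eq (Set.encard_singleton v)))
    exact absurd this (by norm_num)
  · have : v ∈ Set.univ \ {v} := by rw [h']; trivial
    exact this.2 rfl
  · have hsub : (Set.univ : Set V) ⊆ {v, x} := by
      intro y _
      by_cases hy : y = v
      · exact Or.inl hy
      · have : y ∈ Set.univ \ {v} := ⟨trivial, hy⟩
        rw [h'] at this
        exact Or.inr this
    have h2 : ({v, x} : Set V).encard ≤ 2 := by
      apply le_trans (Set.encard_insert_le _ _)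
      rw [Set.encard_singleton]
      norm_num
    have := le_trans hG.1 (le_trans (Set.encard_mono hsub) h2)
    exact absurd this (by norm_num)

lemma prime_connected (hG : GraphIsPrimeOn G (Set.univ : Set V)) : G.Connected := by
  have hne : Nonempty V := by
    obtain ⟨x, -⟩ := encard_pos_of_three hG.1
    exact ⟨x⟩
  rw [SimpleGraph.connected_iff]
  refine ⟨?_, hne⟩
  intro u v
  by_contra hru
  have hmod : GraphIsModuleOn G Set.univ {w | G.Reachable u w} := by
    refine ⟨subset_univ _, ?_⟩
    rintro z ⟨-, hz⟩
    refine Or.inr ?_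
    intro x hx hadj
    exact hz (hx.trans (SimpleGraph.Adj.reachable hadj.symm))
  rcases hG.2 _ hmod with h' | h' | ⟨x, h'⟩
  · exact (Set.eq_empty_iff_forall_notMem.mp h') u (SimpleGraph.Reachable.refl u)
  · apply hru
    have hv : v ∈ {w | G.Reachable u w} := by rw [h']; trivial
    exact hv
  · obtain ⟨w, hw⟩ := prime_not_isolated hG u
    have hu : u ∈ ({x} : Set V) := by rw [← h']; exact SimpleGraph.Reachable.refl u
    have hwx : w ∈ ({x} : Set V) := by rw [← h']; exact SimpleGraph.Adj.reachable hw
    rw [Set.mem_singleton_iff] at hu hwx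
    exact G.loopless.irrefl u (by rw [← hwx.trans hu.symm] at hw ⊢; exact hw)
  
lemma bip_triangle_free (hbip : IsBipartite G) {x y z : V} :
    G.Adj x y → G.Adj y z → ¬ G.Adj x z := by
  obtain ⟨X, Y, hdis, hcov, hX, hY⟩ := hbip
  intro hxy hyz hxz
  have hmem : ∀ w : V, w ∈ X ∨ w ∈ Y := by
    intro w
    have : w ∈ X ∪ Y := by rw [hcov]; trivial
    exact this
  rcases hmem x with hx | hx
  · rcases hmem y with hy | hy
    · exact hX x hx y hy hxy
    · rcases hmem z with hz | hz
      · exact hX x hx z hz hxz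
      · exact hY y hy z hz hyz
  · rcases hmem y with hy | hy
    · rcases hmem z with hz | hz
      · exact hX y hy z hz hyz
      · exact hY x hx z hz hxz
    · exact hY x hx y hy hxy

end AuxBasics

section AuxPaths

open Set

variable {G : SimpleGraph V}

lemma primeP4 {a b c d : V} (hab : G.Adj a b) (hbc : G.Adj b c) (hcd : G.Adj c d)
    (hac : ¬ G.Adj a c) (had : ¬ G.Adj a d) (hbd : ¬ G.Adj b d)
    (hac' : a ≠ c) (had' : a ≠ d) (hbd' : b ≠ d) :
    GraphIsPrimeOn G {a, b, c, d} := by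
  have hca : ¬ G.Adj c a := fun h => hac h.symm
  have hda : ¬ G.Adj d a := fun h => had h.symm
  have hdb : ¬ G.Adj d b := fun h => hbd h.symm
  have henc : 3 ≤ ({a, b, c, d} : Set V).encard := by
    rw [Set.encard_insert_of_notMem (by simp [hab.ne, hac', had']),
        Set.encard_insert_of_notMem (by simp [hbc.ne, hbd']),
        Set.encard_insert_of_notMem (by simp [hcd.ne]),
        Set.encard_singleton]
    norm_num
  refine ⟨henc, ?_⟩
  intro M hM
  by_contra hcon
  push_neg at hcon
  obtain ⟨hne, hW, hsing⟩ := hcon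
  have haW : a ∈ ({a, b, c, d} : Set V) := by simp
  have hbW : b ∈ ({a, b, c, d} : Set V) := by simp
  have hcW : c ∈ ({a, b, c, d} : Set V) := by simp
  have hdW : d ∈ ({a, b, c, d} : Set V) := by simp
  have memW : ∀ x ∈ ({a, b, c, d} : Set V), x = a ∨ x = b ∨ x = c ∨ x = d := by
    intro x hx; simpa using hx
  have pab : a ∈ M → b ∈ M → a ∈ M ∧ b ∈ M ∧ c ∈ M ∧ d ∈ M := by
    intro h1 h2
    have h3 : c ∈ M := mod_pull hM h2 h1 hcW hbc.symm hca
    have h4 : d ∈ M := mod_pull hM h3 h1 hdW hcd.symm hda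
    exact ⟨h1, h2, h3, h4⟩
  have pac : a ∈ M → c ∈ M → a ∈ M ∧ b ∈ M ∧ c ∈ M ∧ d ∈ M := by
    intro h1 h3
    have h4 : d ∈ M := mod_pull hM h3 h1 hdW hcd.symm hda
    have h2 : b ∈ M := mod_pull hM h1 h4 hbW hab.symm hbd
    exact ⟨h1, h2, h3, h4⟩
  have pad : a ∈ M → d ∈ M → a ∈ M ∧ b ∈ M ∧ c ∈ M ∧ d ∈ M := by
    intro h1 h4
    have h2 : b ∈ M := mod_pull hM h1 h4 hbW hab.symm hbd
    have h3 : c ∈ M := mod_pull hM h2 h1 hcW hbc.symm hca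
    exact ⟨h1, h2, h3, h4⟩
  have pbc : b ∈ M → c ∈ M → a ∈ M ∧ b ∈ M ∧ c ∈ M ∧ d ∈ M := by
    intro h2 h3
    have h1 : a ∈ M := mod_pull hM h2 h3 haW hab hac
    have h4 : d ∈ M := mod_pull hM h3 h1 hdW hcd.symm hda
    exact ⟨h1, h2, h3, h4⟩
  have pbd : b ∈ M → d ∈ M → a ∈ M ∧ b ∈ M ∧ c ∈ M ∧ d ∈ M := by
    intro h2 h4
    have h1 : a ∈ M := mod_pull hM h2 h4 haW hab had
    have h3 : c ∈ M := mod_pull hM h4 h1 hcW hcd hca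
    exact ⟨h1, h2, h3, h4⟩
  have pcd : c ∈ M → d ∈ M → a ∈ M ∧ b ∈ M ∧ c ∈ M ∧ d ∈ M := by
    intro h3 h4
    have h2 : b ∈ M := mod_pull hM h3 h4 hbW hbc hbd
    have h1 : a ∈ M := mod_pull hM h2 h3 haW hab hac
    exact ⟨h1, h2, h3, h4⟩
  obtain ⟨u, hu, v, hv, huv⟩ := two_mem hne.ne_empty hsing
  have hall : a ∈ M ∧ b ∈ M ∧ c ∈ M ∧ d ∈ M := by
    rcases memW u (hM.1 hu) with rfl | rfl | rfl | rfl <;>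
      rcases memW v (hM.1 hv) with rfl | rfl | rfl | rfl <;>
      first
        | exact absurd rfl huv
        | exact pab hu hv | exact pab hv hu
        | exact pac hu hv | exact pac hv hu
        | exact pad hu hv | exact pad hv hu
        | exact pbc hu hv | exact pbc hv hu
        | exact pbd hu hv | exact pbd hv hu
        | exact pcd hu hv | exact pcd hv hu
  apply hW
  apply Set.Subset.antisymm hM.1
  intro x hx
  rcases memW x hx with rfl | rfl | rfl | rfl
  exacts [hall.1, hall.2.1, hall.2.2.1, hall.2.2.2]

lemma primeP5 {a b c d e : V} (hab : G.Adj a b) (hbc : G.Adj b c) (hcd : G.Adj c d)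
    (hde : G.Adj d e)
    (hac : ¬ G.Adj a c) (had : ¬ G.Adj a d) (hae : ¬ G.Adj a e)
    (hbd : ¬ G.Adj b d) (hbe : ¬ G.Adj b e) (hce : ¬ G.Adj c e)
    (hac' : a ≠ c) (had' : a ≠ d) (hae' : a ≠ e)
    (hbd' : b ≠ d) (hbe' : b ≠ e) (hce' : c ≠ e) :
    GraphIsPrimeOn G {a, b, c, d, e} := by
  have hca : ¬ G.Adj c a := fun h => hac h.symm
  have hda : ¬ G.Adj d a := fun h => had h.symm
  have hea : ¬ G.Adj e a := fun h => hae h.symm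
  have hdb : ¬ G.Adj d b := fun h => hbd h.symm
  have heb : ¬ G.Adj e b := fun h => hbe h.symm
  have hec : ¬ G.Adj e c := fun h => hce h.symm
  have henc : 3 ≤ ({a, b, c, d, e} : Set V).encard := by
    rw [Set.encard_insert_of_notMem (by simp [hab.ne, hac', had', hae']),
        Set.encard_insert_of_notMem (by simp [hbc.ne, hbd', hbe']),
        Set.encard_insert_of_notMem (by simp [hcd.ne, hce']),
        Set.encard_insert_of_notMem (by simp [hde.ne]),
        Set.encard_singleton]
    norm_num
  refine ⟨henc, ?_⟩
  intro M hM
  by_contra hcon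
  push_neg at hcon
  obtain ⟨hne, hW, hsing⟩ := hcon
  have haW : a ∈ ({a, b, c, d, e} : Set V) := by simp
  have hbW : b ∈ ({a, b, c, d, e} : Set V) := by simp
  have hcW : c ∈ ({a, b, c, d, e} : Set V) := by simp
  have hdW : d ∈ ({a, b, c, d, e} : Set V) := by simp
  have heW : e ∈ ({a, b, c, d, e} : Set V) := by simp
  have memW : ∀ x ∈ ({a, b, c, d, e} : Set V),
      x = a ∨ x = b ∨ x = c ∨ x = d ∨ x = e := by
    intro x hx; simpa using hx
  -- pull helpers (s splits a pair already in M)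
  have pullc_ba : b ∈ M → a ∈ M → c ∈ M := fun h2 h1 => mod_pull hM h2 h1 hcW hbc.symm hca
  have pulld_ca : c ∈ M → a ∈ M → d ∈ M := fun h3 h1 => mod_pull hM h3 h1 hdW hcd.symm hda
  have pulle_da : d ∈ M → a ∈ M → e ∈ M := fun h4 h1 => mod_pull hM h4 h1 heW hde.symm hea
  have pullb_ad : a ∈ M → d ∈ M → b ∈ M := fun h1 h4 => mod_pull hM h1 h4 hbW hab.symm hbd
  have pullb_ae : a ∈ M → e ∈ M → b ∈ M := fun h1 h5 => mod_pull hM h1 h5 hbW hab.symm hbe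
  have pullc_da : d ∈ M → a ∈ M → c ∈ M := fun h4 h1 => mod_pull hM h4 h1 hcW hcd hca
  have pulld_ea : e ∈ M → a ∈ M → d ∈ M := fun h5 h1 => mod_pull hM h5 h1 hdW hde hda
  have pulla_bc : b ∈ M → c ∈ M → a ∈ M := fun h2 h3 => mod_pull hM h2 h3 haW hab hac
  have pulla_bd : b ∈ M → d ∈ M → a ∈ M := fun h2 h4 => mod_pull hM h2 h4 haW hab had
  have pulla_be : b ∈ M → e ∈ M → a ∈ M := fun h2 h5 => mod_pull hM h2 h5 haW hab hae
  have pullb_cd : c ∈ M → d ∈ M → b ∈ M := fun h3 h4 => mod_pull hM h3 h4 hbW hbc hbd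
  have pullb_ce : c ∈ M → e ∈ M → b ∈ M := fun h3 h5 => mod_pull hM h3 h5 hbW hbc hbe
  have pullc_de : d ∈ M → e ∈ M → c ∈ M := fun h4 h5 => mod_pull hM h4 h5 hcW hcd hce
  have All := fun (h1 : a ∈ M) (h2 : b ∈ M) (h3 : c ∈ M) (h4 : d ∈ M) (h5 : e ∈ M) =>
    (⟨h1, h2, h3, h4, h5⟩ : a ∈ M ∧ b ∈ M ∧ c ∈ M ∧ d ∈ M ∧ e ∈ M)
  have pab : a ∈ M → b ∈ M → a ∈ M ∧ b ∈ M ∧ c ∈ M ∧ d ∈ M ∧ e ∈ M := by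
    intro h1 h2
    have h3 := pullc_ba h2 h1
    have h4 := pulld_ca h3 h1
    exact All h1 h2 h3 h4 (pulle_da h4 h1)
  have pac : a ∈ M → c ∈ M → a ∈ M ∧ b ∈ M ∧ c ∈ M ∧ d ∈ M ∧ e ∈ M := by
    intro h1 h3
    have h4 := pulld_ca h3 h1
    exact All h1 (pullb_ad h1 h4) h3 h4 (pulle_da h4 h1)
  have pad : a ∈ M → d ∈ M → a ∈ M ∧ b ∈ M ∧ c ∈ M ∧ d ∈ M ∧ e ∈ M := by
    intro h1 h4
    exact All h1 (pullb_ad h1 h4) (pullc_da h4 h1) h4 (pulle_da h4 h1)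
  have pae : a ∈ M → e ∈ M → a ∈ M ∧ b ∈ M ∧ c ∈ M ∧ d ∈ M ∧ e ∈ M := by
    intro h1 h5
    have h4 := pulld_ea h5 h1
    exact All h1 (pullb_ad h1 h4) (pullc_da h4 h1) h4 h5
  have pbc : b ∈ M → c ∈ M → a ∈ M ∧ b ∈ M ∧ c ∈ M ∧ d ∈ M ∧ e ∈ M := by
    intro h2 h3
    have h1 := pulla_bc h2 h3
    have h4 := pulld_ca h3 h1
    exact All h1 h2 h3 h4 (pulle_da h4 h1)
  have pbd : b ∈ M → d ∈ M → a ∈ M ∧ b ∈ M ∧ c ∈ M ∧ d ∈ M ∧ e ∈ M := by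
    intro h2 h4
    have h1 := pulla_bd h2 h4
    exact All h1 h2 (pullc_da h4 h1) h4 (pulle_da h4 h1)
  have pbe : b ∈ M → e ∈ M → a ∈ M ∧ b ∈ M ∧ c ∈ M ∧ d ∈ M ∧ e ∈ M := by
    intro h2 h5
    have h1 := pulla_be h2 h5
    have h4 := pulld_ea h5 h1
    exact All h1 h2 (pullc_da h4 h1) h4 h5
  have pcd : c ∈ M → d ∈ M → a ∈ M ∧ b ∈ M ∧ c ∈ M ∧ d ∈ M ∧ e ∈ M := by
    intro h3 h4
    have h2 := pullb_cd h3 h4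
    have h1 := pulla_bc h2 h3
    exact All h1 h2 h3 h4 (pulle_da h4 h1)
  have pce : c ∈ M → e ∈ M → a ∈ M ∧ b ∈ M ∧ c ∈ M ∧ d ∈ M ∧ e ∈ M := by
    intro h3 h5
    have h2 := pullb_ce h3 h5
    have h1 := pulla_bc h2 h3
    exact All h1 h2 h3 (pulld_ea h5 h1) h5
  have pde : d ∈ M → e ∈ M → a ∈ M ∧ b ∈ M ∧ c ∈ M ∧ d ∈ M ∧ e ∈ M := by
    intro h4 h5
    have h3 := pullc_de h4 h5
    have h2 := pullb_ce h3 h5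
    have h1 := pulla_bc h2 h3
    exact All h1 h2 h3 h4 h5
  obtain ⟨u, hu, v, hv, huv⟩ := two_mem hne.ne_empty hsing
  have hall : a ∈ M ∧ b ∈ M ∧ c ∈ M ∧ d ∈ M ∧ e ∈ M := by
    rcases memW u (hM.1 hu) with rfl | rfl | rfl | rfl | rfl <;>
      rcases memW v (hM.1 hv) with rfl | rfl | rfl | rfl | rfl <;>
      first
        | exact absurd rfl huv
        | exact pab hu hv | exact pab hv hu
        | exact pac hu hv | exact pac hv hu
        | exact pad hu hv | exact pad hv hu
        | exact pae hu hv | exact pae hv hu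
        | exact pbc hu hv | exact pbc hv hu
        | exact pbd hu hv | exact pbd hv hu
        | exact pbe hu hv | exact pbe hv hu
        | exact pcd hu hv | exact pcd hv hu
        | exact pce hu hv | exact pce hv hu
        | exact pde hu hv | exact pde hv hu
  apply hW
  apply Set.Subset.antisymm hM.1
  intro x hx
  rcases memW x hx with rfl | rfl | rfl | rfl | rfl
  exacts [hall.1, hall.2.1, hall.2.2.1, hall.2.2.2.1, hall.2.2.2.2]

end AuxPaths


section AuxP5

open Set

variable {G : SimpleGraph V}

lemma dist_le_one_of_adj {u v : V} (h : G.Adj u v) : G.dist u v ≤ 1 :=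
  le_of_eq (SimpleGraph.dist_eq_one_iff_adj.mpr h)

lemma twoK2_P5_aux (hconn : G.Connected)
    (htf : ∀ {x y z : V}, G.Adj x y → G.Adj y z → ¬ G.Adj x z)
    {a b c d : V} (hab : G.Adj a b) (hcd : G.Adj c d)
    (hac : ¬ G.Adj a c) (had : ¬ G.Adj a d) (hbc : ¬ G.Adj b c) (hbd : ¬ G.Adj b d)
    (hm1 : G.dist b c ≤ G.dist a c) (hm2 : G.dist b c ≤ G.dist b d) :
    HasInducedP5On G Set.univ := by
  have hbcne : b ≠ c := fun h => hac (by rw [h] at hab; exact hab)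
  have hbdne : b ≠ d := fun h => had (by rw [h] at hab; exact hab)
  have hacne : a ≠ c := fun h => had (by rw [← h] at hcd; exact hcd)
  have hadne : a ≠ d := fun h => hac (by rw [← h] at hcd; exact hcd.symm)
  obtain ⟨p, hp⟩ := hconn.exists_walk_length_eq_dist b c
  set k := p.length with hkdef
  have hq0 : p.getVert 0 = b := p.getVert_zero
  have hqk : p.getVert k = c := p.getVert_length
  have hdbc : G.dist b c = k := hp.symm
  have hk2 : 2 ≤ k := by
    rcases Nat.lt_or_ge k 2 with h | h
    · exfalso
      interval_cases k
      · exact hbcne (hconn.dist_eq_zero_iff.mp hdbc)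
      · exact hbc (SimpleGraph.dist_eq_one_iff_adj.mp hdbc)
    · exact h
  have hadjq : ∀ i, i < k → G.Adj (p.getVert i) (p.getVert (i + 1)) :=
    fun i hi => p.adj_getVert_succ hi
  have hdb : ∀ i, i ≤ k → G.dist b (p.getVert i) ≤ i := by
    intro i
    induction i with
    | zero => intro _; rw [hq0]; simp [SimpleGraph.dist_self]
    | succ n ih =>
      intro h
      have h1 := ih (by omega)
      have h2 : G.dist (p.getVert n) (p.getVert (n + 1)) ≤ 1 :=
        dist_le_one_of_adj (hadjq n (by omega))
      have h3 := hconn.dist_triangle (u := b) (v := p.getVert n) (w := p.getVert (n + 1))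
      omega
  have hdc : ∀ m i, i + m = k → G.dist (p.getVert i) c ≤ m := by
    intro m
    induction m with
    | zero =>
      intro i hi
      rw [show i = k from by omega, hqk]
      simp [SimpleGraph.dist_self]
    | succ n ih =>
      intro i hi
      have h2 : G.dist (p.getVert i) (p.getVert (i + 1)) ≤ 1 :=
        dist_le_one_of_adj (hadjq i (by omega))
      have h1 := ih (i + 1) (by omega)
      have h3 := hconn.dist_triangle (u := p.getVert i) (v := p.getVert (i + 1)) (w := c)
      omega
  have hinj : ∀ i j, i < j → j ≤ k → p.getVert i ≠ p.getVert j := by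
    intro i j hij hjk heq
    have h1 := hdb i (by omega)
    have h2 := hdc (k - j) j (by omega)
    have h2' : G.dist (p.getVert i) c ≤ k - j := by rw [heq]; exact h2
    have h3 := hconn.dist_triangle (u := b) (v := p.getVert i) (w := c)
    omega
  have hfar : ∀ i j, i + 2 ≤ j → j ≤ k → ¬ G.Adj (p.getVert i) (p.getVert j) := by
    intro i j h2j hjk hadj
    have h1 := hdb i (by omega)
    have h2 := hdc (k - j) j (by omega)
    have h4 : G.dist (p.getVert i) (p.getVert j) ≤ 1 := dist_le_one_of_adj hadj
    have h3 := hconn.dist_triangle (u := b) (v := p.getVert i) (w := p.getVert j)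
    have h5 := hconn.dist_triangle (u := b) (v := p.getVert j) (w := c)
    omega
  have hanot : ∀ i, 1 ≤ i → i ≤ k → ¬ G.Adj a (p.getVert i) := by
    intro i h1i hik hadj
    rcases eq_or_lt_of_le h1i with h | h
    · rw [← h] at hadj
      have hbq1 : G.Adj b (p.getVert 1) := by
        have e1 := hadjq 0 (by omega)
        rw [hq0] at e1
        exact e1
      exact htf hab hbq1 hadj
    · have h2 := hdc (k - i) i (by omega)
      have h3 := hconn.dist_triangle (u := a) (v := p.getVert i) (w := c)
      have h4 : G.dist a (p.getVert i) ≤ 1 := dist_le_one_of_adj hadj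
      omega
  have hdnot : ∀ j, j + 1 ≤ k → ¬ G.Adj d (p.getVert j) := by
    intro j hjk hadj
    rcases eq_or_lt_of_le hjk with h | h
    · have hcq : G.Adj c (p.getVert j) := by
        have e1 := hadjq j (by omega)
        rw [show j + 1 = k from h, hqk] at e1
        exact e1.symm
      exact htf hcd.symm hcq hadj
    · have h1 := hdb j (by omega)
      have h3 := hconn.dist_triangle (u := b) (v := p.getVert j) (w := d)
      have h4 : G.dist (p.getVert j) d ≤ 1 := dist_le_one_of_adj hadj.symm
      omega
  have hbq1 : G.Adj b (p.getVert 1) := by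
    have e1 := hadjq 0 (by omega)
    rw [hq0] at e1
    exact e1
  rcases eq_or_lt_of_le hk2 with hk2' | hk3
  · -- k = 2 : the path is (a, b, q1, c, d)
    have hq1c : G.Adj (p.getVert 1) c := by
      have e2 := hadjq 1 (by omega)
      rw [show (1 : ℕ) + 1 = k from by omega, hqk] at e2
      exact e2
    have haq1 : ¬ G.Adj a (p.getVert 1) := hanot 1 (le_refl 1) (by omega)
    have hq1d : ¬ G.Adj (p.getVert 1) d := fun h => hdnot 1 (by omega) h.symm
    have haq1ne : a ≠ p.getVert 1 := fun h => hac (by rw [h]; exact hq1c)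
    have hbq1ne : b ≠ p.getVert 1 := by
      have := hinj 0 1 (by omega) (by omega)
      rw [hq0] at this
      exact this
    have hq1cne : p.getVert 1 ≠ c := by
      have := hinj 1 k (by omega) (le_refl k)
      rw [hqk] at this
      exact this
    have hq1dne : p.getVert 1 ≠ d := fun h => hbd (by rw [← h]; exact hbq1)
    exact ⟨a, b, p.getVert 1, c, d, trivial, trivial, trivial, trivial, trivial,
      hab.ne, haq1ne, hacne, hadne, hbq1ne, hbcne, hbdne, hq1cne, hq1dne, hcd.ne,
      hab, hbq1, hq1c, hcd, haq1, hac, had, hbc, hbd, hq1d⟩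
  · -- k ≥ 3 : the path is (a, b, q1, q2, q3)
    have h3k : 3 ≤ k := hk3
    have e12 : G.Adj (p.getVert 1) (p.getVert 2) := hadjq 1 (by omega)
    have e23 : G.Adj (p.getVert 2) (p.getVert 3) := hadjq 2 (by omega)
    have haq1 : ¬ G.Adj a (p.getVert 1) := hanot 1 (by omega) (by omega)
    have haq2 : ¬ G.Adj a (p.getVert 2) := hanot 2 (by omega) (by omega)
    have haq3 : ¬ G.Adj a (p.getVert 3) := hanot 3 (by omega) (by omega)
    have hbq2 : ¬ G.Adj b (p.getVert 2) := by
      have := hfar 0 2 (by omega) (by omega)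
      rw [hq0] at this
      exact this
    have hbq3 : ¬ G.Adj b (p.getVert 3) := by
      have := hfar 0 3 (by omega) (by omega)
      rw [hq0] at this
      exact this
    have hq1q3 : ¬ G.Adj (p.getVert 1) (p.getVert 3) := hfar 1 3 (by omega) (by omega)
    have haq1ne : a ≠ p.getVert 1 := fun h => haq2 (by rw [h]; exact e12)
    have haq2ne : a ≠ p.getVert 2 := fun h => haq3 (by rw [h]; exact e23)
    have haq3ne : a ≠ p.getVert 3 := fun h => haq2 (by rw [h]; exact e23.symm)
    have hbq1ne : b ≠ p.getVert 1 := by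
      have := hinj 0 1 (by omega) (by omega); rw [hq0] at this; exact this
    have hbq2ne : b ≠ p.getVert 2 := by
      have := hinj 0 2 (by omega) (by omega); rw [hq0] at this; exact this
    have hbq3ne : b ≠ p.getVert 3 := by
      have := hinj 0 3 (by omega) (by omega); rw [hq0] at this; exact this
    have h12ne := hinj 1 2 (by omega) (by omega)
    have h13ne := hinj 1 3 (by omega) (by omega)
    have h23ne := hinj 2 3 (by omega) (by omega)
    exact ⟨a, b, p.getVert 1, p.getVert 2, p.getVert 3,
      trivial, trivial, trivial, trivial, trivial,
      hab.ne, haq1ne, haq2ne, haq3ne, hbq1ne, hbq2ne, hbq3ne, h12ne, h13ne, h23ne,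
      hab, hbq1, e12, e23, haq1, haq2, haq3, hbq2, hbq3, hq1q3⟩

lemma twoK2_P5 (hconn : G.Connected)
    (htf : ∀ {x y z : V}, G.Adj x y → G.Adj y z → ¬ G.Adj x z)
    {a b c d : V} (hab : G.Adj a b) (hcd : G.Adj c d)
    (hac : ¬ G.Adj a c) (had : ¬ G.Adj a d) (hbc : ¬ G.Adj b c) (hbd : ¬ G.Adj b d) :
    HasInducedP5On G Set.univ := by
  rcases le_total (G.dist b c) (G.dist a c) with h31 | h13
  · rcases le_total (G.dist b d) (G.dist a d) with h42 | h24
    · rcases le_total (G.dist b c) (G.dist b d) with h34 | h43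
      · exact twoK2_P5_aux hconn htf hab hcd hac had hbc hbd h31 h34
      · exact twoK2_P5_aux hconn htf hab hcd.symm had hac hbd hbc h42 h43
    · rcases le_total (G.dist b c) (G.dist a d) with h32 | h23
      · exact twoK2_P5_aux hconn htf hab hcd hac had hbc hbd h31 (le_trans h32 h24)
      · exact twoK2_P5_aux hconn htf hab.symm hcd.symm hbd hbc had hac h24
          (le_trans h23 h31)
  · rcases le_total (G.dist b d) (G.dist a d) with h42 | h24
    · rcases le_total (G.dist a c) (G.dist b d) with h14 | h41
      · exact twoK2_P5_aux hconn htf hab.symm hcd hbc hbd hac had h13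
          (le_trans h14 h42)
      · exact twoK2_P5_aux hconn htf hab hcd.symm had hac hbd hbc h42
          (le_trans h41 h13)
    · rcases le_total (G.dist a c) (G.dist a d) with h12 | h21
      · exact twoK2_P5_aux hconn htf hab.symm hcd hbc hbd hac had h13 h12
      · exact twoK2_P5_aux hconn htf hab.symm hcd.symm hbd hbc had hac h24 h21

end AuxP5


section AuxHalf

open Set

variable {G : SimpleGraph V}

lemma list_min_rel {r : V → V → Prop} :
    ∀ (l : List V), l ≠ [] →
      (∀ a ∈ l, ∀ b ∈ l, ∀ c ∈ l, r a b → r b c → r a c) →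
      (∀ a ∈ l, ∀ b ∈ l, r a b ∨ r b a) →
      ∃ m ∈ l, ∀ z ∈ l, r m z := by
  intro l
  induction l with
  | nil => intro h; exact absurd rfl h
  | cons x xs ih =>
    intro _ htrans htot
    by_cases hxs : xs = []
    · subst hxs
      refine ⟨x, by simp, ?_⟩
      intro y hy
      simp only [List.mem_singleton] at hy
      rcases htot x (by simp) x (by simp) with h | h
      · rw [hy]; exact h
      · rw [hy]; exact h
    · obtain ⟨m, hm, hmin⟩ := ih hxs
        (fun a ha b hb c hc => htrans a (by simp [ha]) b (by simp [hb]) c (by simp [hc]))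
        (fun a ha b hb => htot a (by simp [ha]) b (by simp [hb]))
      rcases htot x (by simp) m (by simp [hm]) with h | h
      · refine ⟨x, by simp, ?_⟩
        intro z hz
        rcases List.mem_cons.mp hz with rfl | hz'
        · rcases htot z (by simp) z (by simp) with h' | h' <;> exact h'
        · exact htrans x (by simp) m (by simp [hm]) z (by simp [hz']) h (hmin z hz')
      · refine ⟨m, by simp [hm], ?_⟩
        intro z hz
        rcases List.mem_cons.mp hz with rfl | hz'
        · exact h
        · exact hmin z hz'

lemma exists_min_rel {r : V → V → Prop} {S : Set V}
    (htrans : ∀ a ∈ S, ∀ b ∈ S, ∀ c ∈ S, r a b → r b c → r a c)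
    (hfin : S.Finite) (hne : S.Nonempty)
    (htot : ∀ a ∈ S, ∀ b ∈ S, r a b ∨ r b a) :
    ∃ m ∈ S, ∀ z ∈ S, r m z := by
  have hl : ∀ x, x ∈ hfin.toFinset.toList ↔ x ∈ S := by
    intro x; rw [Finset.mem_toList, Set.Finite.mem_toFinset]
  have hnil : hfin.toFinset.toList ≠ [] := by
    rw [ne_eq, Finset.toList_eq_nil]
    intro h
    obtain ⟨x, hx⟩ := hne
    have hx' : x ∈ hfin.toFinset := (Set.Finite.mem_toFinset _).mpr hx
    rw [h] at hx'
    simp at hx'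
  obtain ⟨m, hm, hmin⟩ := list_min_rel _ hnil
    (fun a ha b hb c hc =>
      htrans a ((hl a).mp ha) b ((hl b).mp hb) c ((hl c).mp hc))
    (fun a ha b hb => htot a ((hl a).mp ha) b ((hl b).mp hb))
  exact ⟨m, (hl m).mp hm, fun z hz => hmin z ((hl z).mpr hz)⟩

lemma prime_no_twins (hG : GraphIsPrimeOn G (Set.univ : Set V)) {u v : V}
    (huv : u ≠ v) (hnadj : ¬ G.Adj u v) (hsame : ∀ w, G.Adj w u ↔ G.Adj w v) :
    False := by
  have hmod : GraphIsModuleOn G Set.univ {u, v} := by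
    refine ⟨subset_univ _, ?_⟩
    rintro z ⟨-, hz⟩
    by_cases h : G.Adj z u
    · refine Or.inl ?_
      rintro x hx
      simp only [Set.mem_insert_iff, Set.mem_singleton_iff] at hx
      rcases hx with rfl | rfl
      · exact h
      · exact (hsame z).mp h
    · refine Or.inr ?_
      rintro x hx
      simp only [Set.mem_insert_iff, Set.mem_singleton_iff] at hx
      rcases hx with rfl | rfl
      · exact h
      · exact fun hh => h ((hsame z).mpr hh)
  rcases hG.2 _ hmod with h | h | ⟨x, h⟩
  · exact (Set.eq_empty_iff_forall_notMem.mp h) u (Or.inl rfl)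
  · have hsub : (Set.univ : Set V) ⊆ {u, v} := by rw [h]
    have h2 : ({u, v} : Set V).encard ≤ 2 := by
      apply le_trans (Set.encard_insert_le _ _)
      rw [Set.encard_singleton]; norm_num
    exact absurd (le_trans hG.1 (le_trans (Set.encard_mono hsub) h2)) (by norm_num)
  · have h1 : u ∈ ({x} : Set V) := by rw [← h]; exact Or.inl rfl
    have h2 : v ∈ ({x} : Set V) := by rw [← h]; exact Or.inr rfl
    rw [Set.mem_singleton_iff] at h1 h2
    exact huv (h1.trans h2.symm)

lemma chain_of_no2 {X Y : Set V} (hcov : X ∪ Y = Set.univ)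
    (hX : ∀ u ∈ X, ∀ v ∈ X, ¬ G.Adj u v) (hY : ∀ u ∈ Y, ∀ v ∈ Y, ¬ G.Adj u v)
    (hno2 : ∀ a b c d : V, G.Adj a b → G.Adj c d → ¬ G.Adj a c → ¬ G.Adj a d →
      ¬ G.Adj b c → ¬ G.Adj b d → False) :
    ∀ u ∈ Y, ∀ u' ∈ Y,
      (∀ z, G.Adj u z → G.Adj u' z) ∨ (∀ z, G.Adj u' z → G.Adj u z) := by
  have hmem : ∀ w : V, w ∈ X ∨ w ∈ Y := by
    intro w
    have : w ∈ X ∪ Y := by rw [hcov]; trivial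
    exact this
  have hnbrX : ∀ y ∈ Y, ∀ z, G.Adj y z → z ∈ X := by
    intro y hy z hz
    rcases hmem z with h | h
    · exact h
    · exact absurd hz (hY y hy z h)
  intro u hu u' hu'
  by_contra hcon
  push_neg at hcon
  obtain ⟨⟨z, hz, hz'⟩, ⟨z', hw, hw'⟩⟩ := hcon
  exact hno2 u z u' z' hz hw (hY u hu u' hu') hw' (fun h => hz' h.symm)
    (hX z (hnbrX u hu z hz) z' (hnbrX u' hu' z' hw))

/-- One side of the half-graph construction. -/
lemma half_aux [Finite V] (hG : GraphIsPrimeOn G (Set.univ : Set V))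
    {X Y : Set V} (hcov : X ∪ Y = Set.univ)
    (hX : ∀ u ∈ X, ∀ v ∈ X, ¬ G.Adj u v) (hY : ∀ u ∈ Y, ∀ v ∈ Y, ¬ G.Adj u v)
    (hno2 : ∀ a b c d : V, G.Adj a b → G.Adj c d → ¬ G.Adj a c → ¬ G.Adj a d →
      ¬ G.Adj b c → ¬ G.Adj b d → False) :
    ∃ φ : V → V, (∀ x ∈ X, G.Adj x (φ x)) ∧ (∀ x ∈ X, φ x ∈ Y) ∧
      Set.InjOn φ X ∧
      (∀ x ∈ X, ∀ y, (G.Adj x y ↔ ∀ z, G.Adj (φ x) z → G.Adj y z)) := by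
  classical
  have hmem : ∀ w : V, w ∈ X ∨ w ∈ Y := by
    intro w
    have : w ∈ X ∪ Y := by rw [hcov]; trivial
    exact this
  have hnbrY : ∀ x ∈ X, ∀ z, G.Adj x z → z ∈ Y := by
    intro x hx z hz
    rcases hmem z with h | h
    · exact absurd hz (hX x hx z h)
    · exact h
  have chainY := chain_of_no2 hcov hX hY hno2
  have hφex : ∀ x, x ∈ X →
      ∃ m, G.Adj x m ∧ ∀ y, G.Adj x y → (∀ z, G.Adj m z → G.Adj y z) := by
    intro x hx
    obtain ⟨m, hm, hmin⟩ := exists_min_rel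
      (r := fun y y' => ∀ z, G.Adj y z → G.Adj y' z)
      (fun a _ b _ c _ hab hbc z hz => hbc z (hab z hz))
      (Set.toFinite {y | G.Adj x y}) (prime_not_isolated hG x)
      (fun a ha b hb => chainY a (hnbrY x hx a ha) b (hnbrY x hx b hb))
    exact ⟨m, hm, hmin⟩
  set φ : V → V := fun x => if hx : x ∈ X then (hφex x hx).choose else x with hφdef
  have hφeq : ∀ x (hx : x ∈ X), φ x = (hφex x hx).choose := by
    intro x hx
    simp only [hφdef, dif_pos hx]
  have hφ1 : ∀ x ∈ X, G.Adj x (φ x) := by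
    intro x hx
    rw [hφeq x hx]
    exact (hφex x hx).choose_spec.1
  have hφ2 : ∀ x ∈ X, ∀ y, G.Adj x y → ∀ z, G.Adj (φ x) z → G.Adj y z := by
    intro x hx y hy z hz
    rw [hφeq x hx] at hz
    exact (hφex x hx).choose_spec.2 y hy z hz
  have hφY : ∀ x ∈ X, φ x ∈ Y := fun x hx => hnbrY x hx _ (hφ1 x hx)
  have hchar : ∀ x ∈ X, ∀ y, (G.Adj x y ↔ ∀ z, G.Adj (φ x) z → G.Adj y z) := by
    intro x hx y
    constructor
    · exact fun h => hφ2 x hx y h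
    · intro h
      exact (h x (hφ1 x hx).symm).symm
  have hinj : Set.InjOn φ X := by
    intro x hx x' hx' heq
    by_contra hne
    refine prime_no_twins hG hne (hX x hx x' hx') ?_
    intro w
    rw [G.adj_comm w x, G.adj_comm w x']
    constructor
    · intro h
      rw [hchar x' hx' w, ← heq]
      exact hφ2 x hx w h
    · intro h
      rw [hchar x hx w, heq]
      exact hφ2 x' hx' w h
  exact ⟨φ, hφ1, hφY, hinj, hchar⟩

lemma halfgraph_construct [Finite V] (hG : GraphIsPrimeOn G (Set.univ : Set V))
    {X Y : Set V} (hdis : Disjoint X Y) (hcov : X ∪ Y = Set.univ)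
    (hX : ∀ u ∈ X, ∀ v ∈ X, ¬ G.Adj u v) (hY : ∀ u ∈ Y, ∀ v ∈ Y, ¬ G.Adj u v)
    (hno2 : ∀ a b c d : V, G.Adj a b → G.Adj c d → ¬ G.Adj a c → ¬ G.Adj a d →
      ¬ G.Adj b c → ¬ G.Adj b d → False) :
    IsHalfGraph G := by
  obtain ⟨φ, hφ1, hφY, hφinj, hφchar⟩ := half_aux hG hcov hX hY hno2
  obtain ⟨ψ, hψ1, hψX, hψinj, hψchar⟩ :=
    half_aux hG (by rw [Set.union_comm]; exact hcov) hY hX hno2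
  have hmem : ∀ w : V, w ∈ X ∨ w ∈ Y := by
    intro w
    have : w ∈ X ∪ Y := by rw [hcov]; trivial
    exact this
  have himg1 : φ '' X ⊆ Y := by rintro y ⟨x, hx, rfl⟩; exact hφY x hx
  have himg2 : ψ '' Y ⊆ X := by rintro x ⟨y, hy, rfl⟩; exact hψX y hy
  have hc1 : X.ncard ≤ Y.ncard := by
    rw [← Set.ncard_image_of_injOn hφinj]
    exact Set.ncard_le_ncard himg1 (Set.toFinite Y)
  have hc2 : Y.ncard ≤ X.ncard := by
    rw [← Set.ncard_image_of_injOn hψinj]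
    exact Set.ncard_le_ncard himg2 (Set.toFinite X)
  have himgeq : φ '' X = Y := by
    apply Set.eq_of_subset_of_ncard_le himg1 ?_ (Set.toFinite Y)
    rw [Set.ncard_image_of_injOn hφinj]
    omega
  have hbij : Set.BijOn φ X Y := by
    refine ⟨fun x hx => hφY x hx, hφinj, ?_⟩
    rw [← himgeq]
    exact Set.Subset.rfl
  set r : V → V → Prop :=
    fun x x' => x ∈ X ∧ x' ∈ X ∧ ∀ z, G.Adj x' z → G.Adj x z with hrdef
  have chainX := chain_of_no2 (by rw [Set.union_comm]; exact hcov) hY hX hno2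
  have hlin : IsLinearOrderOn X r := by
    refine ⟨?_, ?_, ?_, ?_⟩
    · exact fun x hx => ⟨hx, hx, fun z h => h⟩
    · intro x hx y hy h1 h2
      by_contra hne
      refine prime_no_twins hG hne (hX x hx y hy) ?_
      intro w
      rw [G.adj_comm w x, G.adj_comm w y]
      exact ⟨fun h => h2.2.2 w h, fun h => h1.2.2 w h⟩
    · intro x hx y hy z hz h1 h2
      exact ⟨hx, hz, fun w hw => h1.2.2 w (h2.2.2 w hw)⟩
    · intro x hx y hy
      rcases chainX x hx y hy with h | h
      · exact Or.inr ⟨hy, hx, h⟩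
      · exact Or.inl ⟨hx, hy, h⟩
  have hadj : ∀ u v : V, G.Adj u v ↔ ∃ x ∈ X, ∃ x' ∈ X, r x x' ∧
      ((u = x ∧ v = φ x') ∨ (v = x ∧ u = φ x')) := by
    intro u v
    constructor
    · intro h
      rcases hmem u with hu | hu
      · have hv : v ∈ Y := by
          rcases hmem v with hv | hv
          · exact absurd h (hX u hu v hv)
          · exact hv
        rw [← himgeq] at hv
        obtain ⟨x', hx', rfl⟩ := hv
        refine ⟨u, hu, x', hx', ⟨hu, hx', ?_⟩, Or.inl ⟨rfl, rfl⟩⟩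
        intro z hz
        exact ((hφchar x' hx' z).mp hz u h.symm).symm
      · have hv : v ∈ X := by
          rcases hmem v with hv | hv
          · exact hv
          · exact absurd h (hY u hu v hv)
        have hu' : u ∈ φ '' X := by rw [himgeq]; exact hu
        obtain ⟨x', hx', rfl⟩ := hu'
        refine ⟨v, hv, x', hx', ⟨hv, hx', ?_⟩, Or.inr ⟨rfl, rfl⟩⟩
        intro z hz
        exact ((hφchar x' hx' z).mp hz v h).symm
    · rintro ⟨x, hx, x', hx', hr, (⟨rfl, rfl⟩ | ⟨rfl, rfl⟩)⟩
      · exact hr.2.2 (φ x') (hφ1 x' hx')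
      · exact (hr.2.2 (φ x') (hφ1 x' hx')).symm
  exact ⟨X, Y, r, φ, hdis, hcov, hlin, hbij, hadj⟩

end AuxHalf


section AuxHGCrit

open Set

variable {G : SimpleGraph V} {X Y : Set V} {r : V → V → Prop} {φ : V → V}

lemma hg_XX (h : IsHalfGraphWith G X Y r φ) : ∀ u ∈ X, ∀ v ∈ X, ¬ G.Adj u v := by
  obtain ⟨hdis, hcov, hlin, hbij, hadj⟩ := h
  intro u hu v hv hAdj
  rcases (hadj u v).mp hAdj with ⟨x, hx, x', hx', hr, (⟨he1, he2⟩ | ⟨he1, he2⟩)⟩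
  · exact Set.disjoint_left.mp hdis (he2 ▸ hv) (hbij.1 hx')
  · exact Set.disjoint_left.mp hdis (he2 ▸ hu) (hbij.1 hx')

lemma hg_YY (h : IsHalfGraphWith G X Y r φ) : ∀ u ∈ Y, ∀ v ∈ Y, ¬ G.Adj u v := by
  obtain ⟨hdis, hcov, hlin, hbij, hadj⟩ := h
  intro u hu v hv hAdj
  rcases (hadj u v).mp hAdj with ⟨x, hx, x', hx', hr, (⟨he1, he2⟩ | ⟨he1, he2⟩)⟩
  · exact Set.disjoint_left.mp hdis (he1 ▸ hx) hu
  · exact Set.disjoint_left.mp hdis (he1 ▸ hx) hv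

lemma hg_adj_iff (h : IsHalfGraphWith G X Y r φ) :
    ∀ x ∈ X, ∀ x' ∈ X, (G.Adj x (φ x') ↔ r x x') := by
  obtain ⟨hdis, hcov, hlin, hbij, hadj⟩ := h
  intro x hx x' hx'
  constructor
  · intro hAdj
    rcases (hadj x (φ x')).mp hAdj with ⟨x₀, hx₀, x₁, hx₁, hr, (⟨he1, he2⟩ | ⟨he1, he2⟩)⟩
    · have hxx : x' = x₁ := hbij.2.1 hx' hx₁ he2
      rw [he1, hxx]
      exact hr
    · exact absurd (hbij.1 hx₁) (fun hh => Set.disjoint_left.mp hdis (he2 ▸ hx) hh)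
  · intro hr
    exact (hadj x (φ x')).mpr ⟨x, hx, x', hx', hr, Or.inl ⟨rfl, rfl⟩⟩

lemma halfgraph_prime [Finite V] (hcard : 3 ≤ (Set.univ : Set V).encard)
    (h : IsHalfGraphWith G X Y r φ) : GraphIsPrimeOn G Set.univ := by
  have hXX := hg_XX h
  have hYY := hg_YY h
  have hiff := hg_adj_iff h
  obtain ⟨hdis, hcov, hlin, hbij, hadj⟩ := h
  obtain ⟨hrefl, hanti, htrans, htot⟩ := hlin
  have hmem : ∀ w : V, w ∈ X ∨ w ∈ Y := by
    intro w
    have : w ∈ X ∪ Y := by rw [hcov]; trivial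
    exact this
  have hsurj : ∀ y ∈ Y, ∃ b ∈ X, φ b = y := by
    intro y hy
    obtain ⟨b, hb, he⟩ := hbij.2.2 hy
    exact ⟨b, hb, he⟩
  have hXne : X.Nonempty := by
    obtain ⟨v, -⟩ := encard_pos_of_three hcard
    rcases hmem v with h' | h'
    · exact ⟨v, h'⟩
    · obtain ⟨b, hb, -⟩ := hsurj v h'
      exact ⟨b, hb⟩
  obtain ⟨xm, hxmX, hxmin⟩ := exists_min_rel (r := r)
    (fun a ha b hb c hc => htrans a ha b hb c hc)
    (Set.toFinite X) hXne (fun a ha b hb => htot a ha b hb)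
  obtain ⟨xM, hxMX, hxmax⟩ := exists_min_rel (r := fun a b => r b a)
    (fun a ha b hb c hc h1 h2 => htrans c hc b hb a ha h2 h1)
    (Set.toFinite X) hXne (fun a ha b hb => (htot b hb a ha))
  refine ⟨hcard, ?_⟩
  intro M hM
  by_contra hcon
  push_neg at hcon
  obtain ⟨hne, hW, hsing⟩ := hcon
  apply hW
  apply Set.Subset.antisymm hM.1
  have engine : ∀ x ∈ X, ∀ b ∈ X, x ∈ M → φ b ∈ M → Set.univ ⊆ M := by
    intro x hxX b hbX hxM hbM
    have hxmM : xm ∈ M := by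
      by_cases he : xm = x
      · rw [he]; exact hxM
      · refine mod_pull hM hbM hxM trivial ?_ ?_
        · exact (hiff xm hxmX b hbX).mpr (hxmin b hbX)
        · exact hXX xm hxmX x hxX
    have hφxM : φ xM ∈ M := by
      by_cases he : φ xM = φ b
      · rw [he]; exact hbM
      · refine mod_pull hM hxM hbM trivial ?_ ?_
        · exact ((hiff x hxX xM hxMX).mpr (hxmax x hxX)).symm
        · exact hYY (φ xM) (hbij.1 hxMX) (φ b) (hbij.1 hbX)
    have hXsub : ∀ a ∈ X, a ∈ M := by
      intro a haX
      by_cases he : a = xm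
      · rw [he]; exact hxmM
      · refine mod_pull hM hφxM hxmM trivial ?_ ?_
        · exact (hiff a haX xM hxMX).mpr (hxmax a haX)
        · exact hXX a haX xm hxmX
    have hYsub : ∀ c ∈ X, φ c ∈ M := by
      intro c hcX
      by_cases he : φ c = φ xM
      · rw [he]; exact hφxM
      · refine mod_pull hM hxmM hφxM trivial ?_ ?_
        · exact ((hiff xm hxmX c hcX).mpr (hxmin c hcX)).symm
        · exact hYY (φ c) (hbij.1 hcX) (φ xM) (hbij.1 hxMX)
    intro w _
    rcases hmem w with hw | hw
    · exact hXsub w hw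
    · obtain ⟨b', hb', he⟩ := hsurj w hw
      rw [← he]; exact hYsub b' hb'
  obtain ⟨u, huM, v, hvM, huv⟩ := two_mem hne.ne_empty hsing
  rcases hmem u with hu | hu <;> rcases hmem v with hv | hv
  · rcases htot u hu v hv with hr | hr
    · have hφuM : φ u ∈ M := by
        refine mod_pull hM huM hvM trivial ?_ ?_
        · exact ((hiff u hu u hu).mpr (hrefl u hu)).symm
        · intro hh
          exact huv (hanti u hu v hv hr ((hiff v hv u hu).mp hh.symm))
      exact engine u hu u hu huM hφuM
    · have hφvM : φ v ∈ M := by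
        refine mod_pull hM hvM huM trivial ?_ ?_
        · exact ((hiff v hv v hv).mpr (hrefl v hv)).symm
        · intro hh
          exact huv (hanti u hu v hv ((hiff u hu v hv).mp hh.symm) hr)
      exact engine v hv v hv hvM hφvM
  · obtain ⟨b, hb, he⟩ := hsurj v hv
    exact engine u hu b hb huM (by rw [he]; exact hvM)
  · obtain ⟨b, hb, he⟩ := hsurj u hu
    exact engine v hv b hb hvM (by rw [he]; exact huM)
  · obtain ⟨a, ha, hea⟩ := hsurj u hu
    obtain ⟨b, hb, heb⟩ := hsurj v hv
    have hab : a ≠ b := fun h0 => huv (by rw [← hea, ← heb, h0])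
    rcases htot a ha b hb with hr | hr
    · have hbM : b ∈ M := by
        refine mod_pull hM hvM huM trivial ?_ ?_
        · rw [← heb]; exact (hiff b hb b hb).mpr (hrefl b hb)
        · rw [← hea]
          intro hh
          exact hab (hanti a ha b hb hr ((hiff b hb a ha).mp hh))
      exact engine b hb b hb hbM (by rw [heb]; exact hvM)
    · have haM : a ∈ M := by
        refine mod_pull hM huM hvM trivial ?_ ?_
        · rw [← hea]; exact (hiff a ha a ha).mpr (hrefl a ha)
        · rw [← heb]
          intro hh
          exact hab (hanti a ha b hb ((hiff a ha b hb).mp hh) hr)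
      exact engine a ha a ha haM (by rw [hea]; exact huM)

lemma encard_diff_singleton_ge {S : Set V} {k : ℕ∞} (h : k + 1 ≤ S.encard) (a : V) :
    k ≤ (S \ {a}).encard := by
  by_cases ha : a ∈ S
  · have h1 := Set.encard_diff_singleton_add_one ha
    rw [← h1] at h
    exact (WithTop.add_le_add_iff_right ENat.one_ne_top).mp h
  · rw [Set.diff_singleton_eq_self ha]
    exact le_trans le_self_add h

lemma halfgraph_crit_del [Finite V] (hcard : 4 ≤ (Set.univ : Set V).encard)
    (h : IsHalfGraphWith G X Y r φ) (w : V) :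
    ¬ GraphIsPrimeOn G (Set.univ \ {w}) := by
  have hXX := hg_XX h
  have hYY := hg_YY h
  have hiff := hg_adj_iff h
  obtain ⟨hdis, hcov, hlin, hbij, hadj⟩ := h
  obtain ⟨hrefl, hanti, htrans, htot⟩ := hlin
  have hmem : ∀ z : V, z ∈ X ∨ z ∈ Y := by
    intro z
    have : z ∈ X ∪ Y := by rw [hcov]; trivial
    exact this
  have hsurj : ∀ y ∈ Y, ∃ b ∈ X, φ b = y := by
    intro y hy
    obtain ⟨b, hb, he⟩ := hbij.2.2 hy
    exact ⟨b, hb, he⟩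
  have hW3 : 3 ≤ (Set.univ \ {w} : Set V).encard :=
    encard_diff_singleton_ge (le_trans (by norm_num) hcard) w
  intro hP
  rcases hmem w with hwX | hwY
  · -- w ∈ X
    have hφwY : φ w ∈ Y := hbij.1 hwX
    have hφww : φ w ≠ w := fun he => Set.disjoint_left.mp hdis (by rw [he]; exact hwX) hφwY
    by_cases hmin : ∀ z ∈ X, r w z
    · -- φ w is isolated after deleting w
      have hiso : ∀ x ∈ (Set.univ \ {w}) \ {φ w}, ¬ G.Adj (φ w) x := by
        rintro x ⟨⟨-, hxw⟩, -⟩ hAdj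
        rcases hmem x with hx | hx
        · have hrxw : r x w := (hiff x hx w hwX).mp hAdj.symm
          exact hxw (hanti x hx w hwX hrxw (hmin x hx))
        · exact hYY (φ w) hφwY x hx hAdj
      have hmod : GraphIsModuleOn G (Set.univ \ {w}) ((Set.univ \ {w}) \ {φ w}) := by
        refine ⟨diff_subset, ?_⟩
        rintro z ⟨hzW, hzM⟩
        have hz : z = φ w := by
          by_contra h'
          exact hzM ⟨hzW, h'⟩
        subst hz
        exact Or.inr (fun x hx hAdj => hiso x hx hAdj)
      have h2 : 2 ≤ ((Set.univ \ {w}) \ {φ w} : Set V).encard :=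
        encard_diff_singleton_ge (le_trans (by norm_num) hW3) (φ w)
      rcases hP.2 _ hmod with h' | h' | ⟨x, h'⟩
      · rw [h', Set.encard_empty] at h2
        exact absurd h2 (by norm_num)
      · have : φ w ∈ (Set.univ \ {w}) \ {φ w} := by
          rw [h']; exact ⟨trivial, hφww⟩
        exact this.2 rfl
      · rw [h', Set.encard_singleton] at h2
        exact absurd h2 (by norm_num)
    · push_neg at hmin
      obtain ⟨p, hpX, hpw⟩ := hmin
      have hppw : r p w := by
        rcases htot p hpX w hwX with h' | h'
        · exact h'
        · exact absurd h' hpw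
      have hpne : p ≠ w := by
        rintro rfl
        exact hpw (hrefl p hpX)
      have hSne : ({a | a ∈ X ∧ a ≠ w ∧ r a w} : Set V).Nonempty := ⟨p, hpX, hpne, hppw⟩
      obtain ⟨q, hqS, hqmax⟩ := exists_min_rel (r := fun a b => r b a)
        (fun a ha b hb c hc h1 h2 => htrans c hc.1 b hb.1 a ha.1 h2 h1)
        (Set.toFinite _) hSne (fun a ha b hb => htot b hb.1 a ha.1)
      -- hqmax : ∀ z ∈ S, r z q
      have hqX := hqS.1
      have hφqφw : φ q ≠ φ w := fun he => hqS.2.1 (hbij.2.1 hqX hwX he)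
      have hMsub : ({φ q, φ w} : Set V) ⊆ Set.univ \ {w} := by
        rintro x hx
        simp only [Set.mem_insert_iff, Set.mem_singleton_iff] at hx
        rcases hx with rfl | rfl
        · exact ⟨trivial, fun he => Set.disjoint_left.mp hdis (by rw [he]; exact hwX) (hbij.1 hqX)⟩
        · exact ⟨trivial, hφww⟩
      have hmod : GraphIsModuleOn G (Set.univ \ {w}) {φ q, φ w} := by
        refine ⟨hMsub, ?_⟩
        rintro z ⟨⟨-, hzw⟩, hzM⟩
        simp only [Set.mem_insert_iff, Set.mem_singleton_iff, not_or] at hzM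
        rcases hmem z with hz | hz
        · -- z ∈ X, z ≠ w
          have hiffz : G.Adj z (φ q) ↔ G.Adj z (φ w) := by
            rw [hiff z hz q hqX, hiff z hz w hwX]
            constructor
            · intro h1
              exact htrans z hz q hqX w hwX h1 hqS.2.2
            · intro h1
              exact hqmax z ⟨hz, hzw, h1⟩
          by_cases hA : G.Adj z (φ w)
          · refine Or.inl ?_
            rintro x hx
            simp only [Set.mem_insert_iff, Set.mem_singleton_iff] at hx
            rcases hx with rfl | rfl
            · exact hiffz.mpr hA
            · exact hA
          · refine Or.inr ?_
            rintro x hx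
            simp only [Set.mem_insert_iff, Set.mem_singleton_iff] at hx
            rcases hx with rfl | rfl
            · exact fun hh => hA (hiffz.mp hh)
            · exact hA
        · refine Or.inr ?_
          rintro x hx
          simp only [Set.mem_insert_iff, Set.mem_singleton_iff] at hx
          rcases hx with rfl | rfl
          · exact hYY z hz (φ q) (hbij.1 hqX)
          · exact hYY z hz (φ w) hφwY
      have hpair : ({φ q, φ w} : Set V).encard = 2 := Set.encard_pair hφqφw
      rcases hP.2 _ hmod with h' | h' | ⟨x, h'⟩
      · rw [h', Set.encard_empty] at hpair
        exact absurd hpair (by norm_num)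
      · rw [h'] at hpair
        rw [hpair] at hW3
        exact absurd hW3 (by norm_num)
      · rw [h', Set.encard_singleton] at hpair
        exact absurd hpair (by norm_num)
  · -- w ∈ Y
    obtain ⟨b, hbX, hbe⟩ := hsurj w hwY
    have hbw : b ≠ w := fun he => Set.disjoint_left.mp hdis (he ▸ hbX) hwY
    by_cases hmax : ∀ z ∈ X, r z b
    · -- b is isolated after deleting w = φ b
      have hiso : ∀ x ∈ (Set.univ \ {w}) \ {b}, ¬ G.Adj b x := by
        rintro x ⟨⟨-, hxw⟩, hxb⟩ hAdj
        rcases hmem x with hx | hx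
        · exact hXX b hbX x hx hAdj
        · obtain ⟨c, hcX, hce⟩ := hsurj x hx
          rw [← hce] at hAdj
          have hrbc : r b c := (hiff b hbX c hcX).mp hAdj
          have : c = b := hanti c hcX b hbX (hmax c hcX) hrbc
          apply hxw
          rw [← hce, this, hbe]
          exact rfl
      have hmod : GraphIsModuleOn G (Set.univ \ {w}) ((Set.univ \ {w}) \ {b}) := by
        refine ⟨diff_subset, ?_⟩
        rintro z ⟨hzW, hzM⟩
        have hz : z = b := by
          by_contra h'
          exact hzM ⟨hzW, h'⟩
        subst hz
        exact Or.inr (fun x hx hAdj => hiso x hx hAdj)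
      have h2 : 2 ≤ ((Set.univ \ {w}) \ {b} : Set V).encard :=
        encard_diff_singleton_ge (le_trans (by norm_num) hW3) b
      rcases hP.2 _ hmod with h' | h' | ⟨x, h'⟩
      · rw [h', Set.encard_empty] at h2
        exact absurd h2 (by norm_num)
      · have : b ∈ (Set.univ \ {w}) \ {b} := by
          rw [h']; exact ⟨trivial, hbw⟩
        exact this.2 rfl
      · rw [h', Set.encard_singleton] at h2
        exact absurd h2 (by norm_num)
    · push_neg at hmax
      obtain ⟨c, hcX, hcb⟩ := hmax
      have hbc : r b c := by
        rcases htot c hcX b hbX with h' | h'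
        · exact absurd h' hcb
        · exact h'
      have hcne : c ≠ b := by
        rintro rfl
        exact hcb (hrefl c hcX)
      have hSne : ({a | a ∈ X ∧ a ≠ b ∧ r b a} : Set V).Nonempty := ⟨c, hcX, hcne, hbc⟩
      obtain ⟨s, hsS, hsmin⟩ := exists_min_rel (r := r)
        (fun a ha b' hb' c' hc' h1 h2 => htrans a ha.1 b' hb'.1 c' hc'.1 h1 h2)
        (Set.toFinite _) hSne (fun a ha b' hb' => htot a ha.1 b' hb'.1)
      have hsX := hsS.1
      have hsb : s ≠ b := hsS.2.1
      have hMsub : ({b, s} : Set V) ⊆ Set.univ \ {w} := by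
        rintro x hx
        simp only [Set.mem_insert_iff, Set.mem_singleton_iff] at hx
        rcases hx with rfl | rfl
        · exact ⟨trivial, hbw⟩
        · exact ⟨trivial, fun he => Set.disjoint_left.mp hdis (he ▸ hsX) hwY⟩
      have hmod : GraphIsModuleOn G (Set.univ \ {w}) {b, s} := by
        refine ⟨hMsub, ?_⟩
        rintro z ⟨⟨-, hzw⟩, hzM⟩
        simp only [Set.mem_insert_iff, Set.mem_singleton_iff, not_or] at hzM
        rcases hmem z with hz | hz
        · refine Or.inr ?_
          rintro x hx
          simp only [Set.mem_insert_iff, Set.mem_singleton_iff] at hx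
          rcases hx with h9 | h9
          · exact fun hh => hXX z hz b hbX (h9 ▸ hh)
          · exact fun hh => hXX z hz s hsX (h9 ▸ hh)
        · obtain ⟨c', hc'X, hc'e⟩ := hsurj z hz
          have hc'b : c' ≠ b := by
            intro h9
            apply hzw
            rw [← hc'e, h9, hbe]
            exact rfl
          have hiffz : G.Adj z b ↔ G.Adj z s := by
            rw [← hc'e, G.adj_comm _ b, G.adj_comm _ s,
              hiff b hbX c' hc'X, hiff s hsX c' hc'X]
            constructor
            · intro h1
              exact hsmin c' ⟨hc'X, hc'b, h1⟩
            · intro h1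
              exact htrans b hbX s hsX c' hc'X hsS.2.2 h1
          by_cases hA : G.Adj z b
          · refine Or.inl ?_
            rintro x hx
            simp only [Set.mem_insert_iff, Set.mem_singleton_iff] at hx
            rcases hx with rfl | rfl
            · exact hA
            · exact hiffz.mp hA
          · refine Or.inr ?_
            rintro x hx
            simp only [Set.mem_insert_iff, Set.mem_singleton_iff] at hx
            rcases hx with rfl | rfl
            · exact hA
            · exact fun hh => hA (hiffz.mpr hh)
      have hpair : ({b, s} : Set V).encard = 2 := Set.encard_pair (fun he => hsb he.symm)
      rcases hP.2 _ hmod with h' | h' | ⟨x, h'⟩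
      · rw [h', Set.encard_empty] at hpair
        exact absurd hpair (by norm_num)
      · rw [h'] at hpair
        rw [hpair] at hW3
        exact absurd hW3 (by norm_num)
      · rw [h', Set.encard_singleton] at hpair
        exact absurd hpair (by norm_num)

end AuxHGCrit


/-- Proposition 5.3: for a finite bipartite graph `Γ` on at least 4 vertices,
the following are equivalent: `Γ` is `P₅`-free and prime; `Γ` is critical; `Γ`
is a half graph. -/
theorem statement19 (G : SimpleGraph V) [Finite V] (hbip : IsBipartite G)
    (hcard : 4 ≤ (Set.univ : Set V).encard) :
    ((¬ HasInducedP5On G Set.univ ∧ GraphIsPrimeOn G Set.univ) ↔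
      GraphIsCriticalOn G Set.univ) ∧
    (GraphIsCriticalOn G Set.univ ↔ IsHalfGraph G) := by
  classical
  have hcard3 : 3 ≤ (Set.univ : Set V).encard := le_trans (by norm_num) hcard
  have hAC : (¬ HasInducedP5On G Set.univ ∧ GraphIsPrimeOn G Set.univ) → IsHalfGraph G := by
    rintro ⟨hP5, hPr⟩
    obtain ⟨X, Y, hdis, hcov, hX, hY⟩ := hbip
    have htf : ∀ {x y z : V}, G.Adj x y → G.Adj y z → ¬ G.Adj x z :=
      fun hxy hyz => bip_triangle_free ⟨X, Y, hdis, hcov, hX, hY⟩ hxy hyz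
    have hconn := prime_connected hPr
    have hno2 : ∀ a b c d : V, G.Adj a b → G.Adj c d → ¬ G.Adj a c → ¬ G.Adj a d →
        ¬ G.Adj b c → ¬ G.Adj b d → False := by
      intro a b c d h1 h2 h3 h4 h5 h6
      exact hP5 (twoK2_P5 hconn htf h1 h2 h3 h4 h5 h6)
    exact halfgraph_construct hPr hdis hcov hX hY hno2
  have hCB : IsHalfGraph G → GraphIsCriticalOn G Set.univ := by
    rintro ⟨X, Y, r, φ, hhg⟩
    refine ⟨halfgraph_prime hcard3 hhg, ?_⟩
    intro v _
    exact halfgraph_crit_del hcard hhg v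
  have hBA : GraphIsCriticalOn G Set.univ →
      (¬ HasInducedP5On G Set.univ ∧ GraphIsPrimeOn G Set.univ) := by
    rintro ⟨hPr, hdel⟩
    refine ⟨?_, hPr⟩
    rintro ⟨a, b, c, d, e, -, -, -, -, -, hab', hac', had', hae', hbc', hbd', hbe',
      hcd', hce', hde', hab, hbc, hcd, hde, hac, had, hae, hbd, hbe, hce⟩
    have hP4 := primeP4 hab hbc hcd hac had hbd hac' had' hbd'
    have hP5 := primeP5 hab hbc hcd hde hac had hae hbd hbe hce hac' had' hae' hbd' hbe' hce'
    have heW4 : e ∉ ({a, b, c, d} : Set V) := by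
      simp only [Set.mem_insert_iff, Set.mem_singleton_iff]
      push_neg
      exact ⟨fun h => hae' h.symm, fun h => hbe' h.symm,
        fun h => hce' h.symm, fun h => hde' h.symm⟩
    have hcomp : Set.univ \ ({a, b, c, d, e} : Set V) =
        (Set.univ \ ({a, b, c, d} : Set V)) \ {e} := by
      ext x
      simp only [Set.mem_diff, Set.mem_insert_iff, Set.mem_singleton_iff,
        Set.mem_univ, true_and]
      tauto
    have heC : e ∈ Set.univ \ ({a, b, c, d} : Set V) := ⟨trivial, heW4⟩
    have hn : (Set.univ \ ({a, b, c, d, e} : Set V)).ncard + 1 =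
        (Set.univ \ ({a, b, c, d} : Set V)).ncard := by
      rw [hcomp]
      exact Set.ncard_diff_singleton_add_one heC (Set.toFinite _)
    rcases Nat.even_or_odd ((Set.univ \ ({a, b, c, d} : Set V)).ncard) with hpar | hpar
    · -- then the complement of the P5 has odd cardinality
      have hodd : Odd ((Set.univ \ ({a, b, c, d, e} : Set V)).ncard) := by
        rcases Nat.even_or_odd ((Set.univ \ ({a, b, c, d, e} : Set V)).ncard) with h | h
        · exfalso
          rw [Nat.even_iff] at hpar h
          omega
        · exact h
      obtain ⟨v, hv⟩ := ER_chain hPr _ _ hP5 rfl hodd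
      exact hdel v trivial hv
    · obtain ⟨v, hv⟩ := ER_chain hPr _ _ hP4 rfl hpar
      exact hdel v trivial hv
  exact ⟨⟨fun hA => hCB (hAC hA), hBA⟩, ⟨fun hB => hAC (hBA hB), hCB⟩⟩
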